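/- Let Γ' = Γ ∪ {∀x φ[∃y◇ψ]} be a clean finite set of formulas, each a subformula of the ABBABE fragment, where ∃y◇ψ is a component of φ (occurring outside the scope of any modality in φ). If ⋀Γ ∧ ∀x φ[∃y◇ψ] is satisfiable in an increasing domain model, then there exists l ≤ 2^{|Γ'|} such that ⋀Γ ∧ ∃y1∃y1'∃y2∃y2'…∃yl∃yl' ∀x φ[ȳ◇ψ] is satisfiable in an increasing domain model, where y1,y1',…,yl,yl' are fresh variables and φ[ȳ◇ψ] is φ with the component ∃y◇ψ replaced by the disjunction ⋁_{i≤l}( ◇ψ[yi/y] ∨ ◇ψ[yi'/y] ). -/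

import Mathlib

set_option maxHeartbeats 1000000

/-! ## Syntax of first-order modal logic (FOML)

Predicate symbols and variables are represented by natural numbers; an atom
`atom p args` applies the predicate symbol `p` to the list of variables `args`
(the arity of `p` in this occurrence is the length of `args`). -/
inductive Formula : Type where
  | atom (p : ℕ) (args : List ℕ)
  | neg  (φ : Formula)
  | and  (φ ψ : Formula)
  | or   (φ ψ : Formula)
  | box  (φ : Formula)
  | dia  (φ : Formula)
  | ex   (x : ℕ) (φ : Formula)
  | all  (x : ℕ) (φ : Formula)
deriving DecidableEq

namespace Formula

def imp (φ ψ : Formula) : Formula := .or φ.neg ψ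
def biimp (φ ψ : Formula) : Formula := .and (imp φ ψ) (imp ψ φ)
/-- a fixed tautology `⊤` -/
def top : Formula := .or (.atom 0 []) (.neg (.atom 0 []))
/-- a fixed contradiction `⊥` -/
def bot : Formula := .and (.atom 0 []) (.neg (.atom 0 []))

end Formula

def bigAnd (l : List Formula) : Formula := l.foldr Formula.and Formula.top
def bigOr  (l : List Formula) : Formula := l.foldr Formula.or Formula.bot

/-! ## Semantics: Kripke structures with world-relative domains -/

structure Model where
  W : Type
  D : Type
  R : W → W → Prop
  dom : W → Set D
  ρ : W → ℕ → Set (List D)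

/-- `M` is an increasing domain model: nonempty countable set of worlds, nonempty
countable domain, nonempty local domains that increase along the accessibility
relation, and interpretations of predicates at a world take values in the local
domain of that world. -/
def Model.Increasing (M : Model) : Prop :=
  Nonempty M.W ∧ Nonempty M.D ∧ Countable M.W ∧ Countable M.D ∧
    (∀ w, (M.dom w).Nonempty) ∧
    (∀ w v, M.R w v → M.dom w ⊆ M.dom v) ∧
    (∀ w p l, l ∈ M.ρ w p → ∀ d ∈ l, d ∈ M.dom w)

def Model.sat (M : Model) : M.W → (ℕ → M.D) → Formula → Prop
  | w, σ, .atom p args => args.map σ ∈ M.ρ w p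
  | w, σ, .neg φ => ¬ M.sat w σ φ
  | w, σ, .and φ ψ => M.sat w σ φ ∧ M.sat w σ ψ
  | w, σ, .or φ ψ => M.sat w σ φ ∨ M.sat w σ ψ
  | w, σ, .box φ => ∀ v, M.R w v → M.sat v σ φ
  | w, σ, .dia φ => ∃ v, M.R w v ∧ M.sat v σ φ
  | w, σ, .ex x φ => ∃ d ∈ M.dom w, M.sat w (Function.update σ x d) φ
  | w, σ, .all x φ => ∀ d ∈ M.dom w, M.sat w (Function.update σ x d) φ

/-- the assignment `σ` is relevant at the world `w` -/
def Model.relevant (M : Model) (w : M.W) (σ : ℕ → M.D) : Prop := ∀ x, σ x ∈ M.dom w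

/-- satisfiability over increasing domain models -/
def Satisfiable (φ : Formula) : Prop :=
  ∃ (M : Model), M.Increasing ∧ ∃ (w : M.W) (σ : ℕ → M.D), M.relevant w σ ∧ M.sat w σ φ
/-! ## Free and bound variables, cleanliness, substitution, α-equivalence -/

namespace Formula

def fv : Formula → Finset ℕ
  | .atom _ args => args.toFinset
  | .neg φ => φ.fv
  | .and φ ψ => φ.fv ∪ ψ.fv
  | .or φ ψ => φ.fv ∪ ψ.fv
  | .box φ => φ.fv
  | .dia φ => φ.fv
  | .ex x φ => φ.fv.erase x
  | .all x φ => φ.fv.erase x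

def bv : Formula → Finset ℕ
  | .atom _ _ => ∅
  | .neg φ => φ.bv
  | .and φ ψ => φ.bv ∪ ψ.bv
  | .or φ ψ => φ.bv ∪ ψ.bv
  | .box φ => φ.bv
  | .dia φ => φ.bv
  | .ex x φ => insert x φ.bv
  | .all x φ => insert x φ.bv

/-- every use of a quantifier in the formula quantifies a distinct variable -/
def uniqueBinders : Formula → Prop
  | .atom _ _ => True
  | .neg φ => φ.uniqueBinders
  | .and φ ψ => φ.uniqueBinders ∧ ψ.uniqueBinders ∧ Disjoint φ.bv ψ.bv
  | .or φ ψ => φ.uniqueBinders ∧ ψ.uniqueBinders ∧ Disjoint φ.bv ψ.bv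
  | .box φ => φ.uniqueBinders
  | .dia φ => φ.uniqueBinders
  | .ex x φ => φ.uniqueBinders ∧ x ∉ φ.bv
  | .all x φ => φ.uniqueBinders ∧ x ∉ φ.bv

/-- a formula is clean if no variable occurs both bound and free in it and
every use of a quantifier quantifies a distinct variable -/
def Clean (φ : Formula) : Prop := φ.uniqueBinders ∧ Disjoint φ.fv φ.bv

/-- `φ.subst y z` is `φ[z/y]`: replace every free occurrence of `y` by `z` -/
def subst (y z : ℕ) : Formula → Formula
  | .atom p args => .atom p (args.map fun v => if v = y then z else v)
  | .neg φ => .neg (φ.subst y z)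
  | .and φ ψ => .and (φ.subst y z) (ψ.subst y z)
  | .or φ ψ => .or (φ.subst y z) (ψ.subst y z)
  | .box φ => .box (φ.subst y z)
  | .dia φ => .dia (φ.subst y z)
  | .ex x φ => if x = y then .ex x φ else .ex x (φ.subst y z)
  | .all x φ => if x = y then .all x φ else .all x (φ.subst y z)

def isLiteralB : Formula → Bool
  | .atom _ _ => true
  | .neg (.atom _ _) => true
  | _ => false

/-- a module is a literal, a `□`-formula, or a `◇`-formula -/
def isModuleB : Formula → Bool
  | .box _ => true
  | .dia _ => true
  | φ => φ.isLiteralB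

/-- the component set `C(φ)` of a formula -/
def comps : Formula → Finset Formula
  | .and φ ψ => φ.comps ∪ ψ.comps
  | .or φ ψ => φ.comps ∪ ψ.comps
  | .ex x φ => insert (.ex x φ) φ.comps
  | .all x φ => insert (.all x φ) φ.comps
  | φ => {φ}

end Formula

/-- α-equivalence (renaming of bound variables) -/
inductive AlphaEq : Formula → Formula → Prop where
  | atom (p : ℕ) (args : List ℕ) : AlphaEq (.atom p args) (.atom p args)
  | neg {φ φ'} : AlphaEq φ φ' → AlphaEq (.neg φ) (.neg φ')
  | and {φ φ' ψ ψ'} : AlphaEq φ φ' → AlphaEq ψ ψ' → AlphaEq (.and φ ψ) (.and φ' ψ')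
  | or {φ φ' ψ ψ'} : AlphaEq φ φ' → AlphaEq ψ ψ' → AlphaEq (.or φ ψ) (.or φ' ψ')
  | box {φ φ'} : AlphaEq φ φ' → AlphaEq (.box φ) (.box φ')
  | dia {φ φ'} : AlphaEq φ φ' → AlphaEq (.dia φ) (.dia φ')
  | ex {x x' : ℕ} {φ φ'}
      (h : ∀ z, z ∉ φ.bv ∪ φ'.bv → AlphaEq (φ.subst x z) (φ'.subst x' z)) :
      AlphaEq (.ex x φ) (.ex x' φ')
  | all {x x' : ℕ} {φ φ'}
      (h : ∀ z, z ∉ φ.bv ∪ φ'.bv → AlphaEq (φ.subst x z) (φ'.subst x' z)) :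
      AlphaEq (.all x φ) (.all x' φ')

/-- a finite set of formulas is clean if the conjunction of its members is clean -/
def CleanSet (Γ : Finset Formula) : Prop :=
  (∀ φ ∈ Γ, φ.uniqueBinders) ∧
    Disjoint (Γ.sup Formula.fv) (Γ.sup Formula.bv) ∧
    (∀ φ ∈ Γ, ∀ ψ ∈ Γ, φ ≠ ψ → Disjoint φ.bv ψ.bv)

/-- `Γ` is Existential-safe: every component of every formula of `Γ` is a module
or universally quantified -/
def ExSafe (Γ : Finset Formula) : Prop :=
  ∀ φ ∈ Γ, ∀ β ∈ φ.comps, β.isModuleB = true ∨ ∃ (x : ℕ) (γ : Formula), β = .all x γ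
/-- The `ABBABE` fragment (in negation normal form): literals, `∧`, `∨`, `□α`,
`◇α`, and the bundles `∀x□α`, `□∀xα`, `□∃xα` together with their duals
`∃x◇α`, `◇∃xα`, `◇∀xα`. -/
inductive ABBABE : Formula → Prop where
  | atom (p : ℕ) (args : List ℕ) : ABBABE (.atom p args)
  | natom (p : ℕ) (args : List ℕ) : ABBABE (.neg (.atom p args))
  | and {φ ψ : Formula} : ABBABE φ → ABBABE ψ → ABBABE (.and φ ψ)
  | or {φ ψ : Formula} : ABBABE φ → ABBABE ψ → ABBABE (.or φ ψ)
  | box {φ : Formula} : ABBABE φ → ABBABE (.box φ)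
  | dia {φ : Formula} : ABBABE φ → ABBABE (.dia φ)
  | allBox {x : ℕ} {φ : Formula} : ABBABE φ → ABBABE (.all x (.box φ))
  | exDia {x : ℕ} {φ : Formula} : ABBABE φ → ABBABE (.ex x (.dia φ))
  | boxAll {x : ℕ} {φ : Formula} : ABBABE φ → ABBABE (.box (.all x φ))
  | diaEx {x : ℕ} {φ : Formula} : ABBABE φ → ABBABE (.dia (.ex x φ))
  | boxEx {x : ℕ} {φ : Formula} : ABBABE φ → ABBABE (.box (.ex x φ))
  | diaAll {x : ℕ} {φ : Formula} : ABBABE φ → ABBABE (.dia (.all x φ))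

/-- `Subf φ ψ` : `φ` is a subformula of `ψ` -/
inductive Subf : Formula → Formula → Prop where
  | refl (φ : Formula) : Subf φ φ
  | neg {φ ψ} : Subf φ ψ → Subf φ (.neg ψ)
  | andL {φ ψ χ} : Subf φ ψ → Subf φ (.and ψ χ)
  | andR {φ ψ χ} : Subf φ χ → Subf φ (.and ψ χ)
  | orL {φ ψ χ} : Subf φ ψ → Subf φ (.or ψ χ)
  | orR {φ ψ χ} : Subf φ χ → Subf φ (.or ψ χ)
  | box {φ ψ} : Subf φ ψ → Subf φ (.box ψ)
  | dia {φ ψ} : Subf φ ψ → Subf φ (.dia ψ)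
  | ex {x : ℕ} {φ ψ} : Subf φ ψ → Subf φ (.ex x ψ)
  | all {x : ℕ} {φ ψ} : Subf φ ψ → Subf φ (.all x ψ)

/-- `φ` is a subformula of the `ABBABE` fragment: it is a subformula of some
formula of the fragment -/
def IsSubABBABE (φ : Formula) : Prop := ∃ ψ, ABBABE ψ ∧ Subf φ ψ
/-- a finite set of formulas is (simultaneously) satisfiable in an increasing
domain model with a relevant assignment -/
def SatSet (Γ : Finset Formula) : Prop :=
  ∃ (M : Model), M.Increasing ∧ ∃ (w : M.W) (σ : ℕ → M.D),
    M.relevant w σ ∧ ∀ φ ∈ Γ, M.sat w σ φ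

/-- the size (number of symbols) of a formula -/
def Formula.size : Formula → ℕ
  | .atom _ args => 1 + args.length
  | .neg φ => φ.size + 1
  | .and φ ψ => φ.size + ψ.size + 1
  | .or φ ψ => φ.size + ψ.size + 1
  | .box φ => φ.size + 1
  | .dia φ => φ.size + 1
  | .ex _ φ => φ.size + 2
  | .all _ φ => φ.size + 2

/-- `replComp t r φ` is `φ[r/t]`: the result of replacing the component `t` of
`φ` by `r` (descending only through boolean connectives and quantifiers) -/
def replComp (t r : Formula) (φ : Formula) : Formula :=
  if φ = t then r
  else
    match φ with
    | .and φ₁ φ₂ => .and (replComp t r φ₁) (replComp t r φ₂)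
    | .or φ₁ φ₂ => .or (replComp t r φ₁) (replComp t r φ₂)
    | .ex x φ₁ => .ex x (replComp t r φ₁)
    | .all x φ₁ => .all x (replComp t r φ₁)
    | φ' => φ'

/-- the existential prefix `∃y1∃y1'∃y2∃y2'…∃yl∃yl'` given by a list of pairs -/
def exChain (ys : List (ℕ × ℕ)) (φ : Formula) : Formula :=
  ys.foldr (fun p acc => .ex p.1 (.ex p.2 acc)) φ

/-- the disjunction `⋁_{i≤l} ( ◇ψ[yi/y] ∨ ◇ψ[yi'/y] )` -/
def mkWitDisj (y : ℕ) (ψ : Formula) (ys : List (ℕ × ℕ)) : Formula :=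
  bigOr (ys.map fun p => .or (.dia (ψ.subst y p.1)) (.dia (ψ.subst y p.2)))

/-! ### Part A : basic lemmas -/

open Formula

lemma Formula.size_pos (φ : Formula) : 1 ≤ φ.size := by
  induction φ <;> simp [Formula.size] <;> omega

/-- satisfaction only depends on the assignment's values on free variables -/
lemma Model.sat_congr (M : Model) (θ : Formula) :
    ∀ (w : M.W) (τ τ' : ℕ → M.D), (∀ z ∈ θ.fv, τ z = τ' z) →
    (M.sat w τ θ ↔ M.sat w τ' θ) := by
  induction θ with
  | atom p args =>
      intro w τ τ' h
      have : args.map τ = args.map τ' := by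
        apply List.map_congr_left
        intro a ha
        exact h a (by simp [Formula.fv, List.mem_toFinset, ha])
      simp [Model.sat, this]
  | neg φ ih =>
      intro w τ τ' h
      simp only [Model.sat]
      rw [ih w τ τ' h]
  | and φ ψ ih1 ih2 =>
      intro w τ τ' h
      simp only [Model.sat]
      rw [ih1 w τ τ' (fun z hz => h z (by simp [Formula.fv, hz])),
        ih2 w τ τ' (fun z hz => h z (by simp [Formula.fv, hz]))]
  | or φ ψ ih1 ih2 =>
      intro w τ τ' h
      simp only [Model.sat]
      rw [ih1 w τ τ' (fun z hz => h z (by simp [Formula.fv, hz])),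
        ih2 w τ τ' (fun z hz => h z (by simp [Formula.fv, hz]))]
  | box φ ih =>
      intro w τ τ' h
      simp only [Model.sat]
      exact forall₂_congr (fun v _ => ih v τ τ' h)
  | dia φ ih =>
      intro w τ τ' h
      simp only [Model.sat]
      exact exists_congr (fun v => and_congr_right (fun _ => ih v τ τ' h))
  | ex z φ ih =>
      intro w τ τ' h
      simp only [Model.sat]
      apply exists_congr; intro d
      apply and_congr_right; intro _
      apply ih
      intro z' hz'
      by_cases hzz : z' = z
      · subst hzz; simp [Function.update]
      · simp only [Function.update, dif_neg hzz]
        exact h z' (by simp [Formula.fv, Finset.mem_erase, hzz, hz'])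
  | all z φ ih =>
      intro w τ τ' h
      simp only [Model.sat]
      apply forall_congr'; intro d
      apply imp_congr_right; intro _
      apply ih
      intro z' hz'
      by_cases hzz : z' = z
      · subst hzz; simp [Function.update]
      · simp only [Function.update, dif_neg hzz]
        exact h z' (by simp [Formula.fv, Finset.mem_erase, hzz, hz'])

/-- substitution lemma (no capture thanks to the bound-variable conditions) -/
lemma Model.sat_subst (M : Model) (ψ : Formula) :
    ∀ (w : M.W) (τ : ℕ → M.D) (y u : ℕ), y ∉ ψ.bv → u ∉ ψ.bv →
    (M.sat w τ (ψ.subst y u) ↔ M.sat w (Function.update τ y (τ u)) ψ) := by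
  induction ψ with
  | atom p args =>
      intro w τ y u _ _
      simp only [Formula.subst, Model.sat]
      have : (args.map fun v => if v = y then u else v).map τ
          = args.map (Function.update τ y (τ u)) := by
        rw [List.map_map]
        apply List.map_congr_left
        intro a _
        by_cases h : a = y <;> simp [h, Function.update]
      rw [this]
  | neg φ ih =>
      intro w τ y u hy hu
      simp only [Formula.subst, Model.sat]
      rw [ih w τ y u hy hu]
  | and φ ψ ih1 ih2 =>
      intro w τ y u hy hu
      simp only [Formula.bv, Finset.mem_union, not_or] at hy hu
      simp only [Formula.subst, Model.sat]
      rw [ih1 w τ y u hy.1 hu.1, ih2 w τ y u hy.2 hu.2]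
  | or φ ψ ih1 ih2 =>
      intro w τ y u hy hu
      simp only [Formula.bv, Finset.mem_union, not_or] at hy hu
      simp only [Formula.subst, Model.sat]
      rw [ih1 w τ y u hy.1 hu.1, ih2 w τ y u hy.2 hu.2]
  | box φ ih =>
      intro w τ y u hy hu
      simp only [Formula.subst, Model.sat, Formula.bv] at *
      exact forall₂_congr (fun v _ => ih v τ y u hy hu)
  | dia φ ih =>
      intro w τ y u hy hu
      simp only [Formula.subst, Model.sat, Formula.bv] at *
      exact exists_congr (fun v => and_congr_right (fun _ => ih v τ y u hy hu))
  | ex z φ ih =>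
      intro w τ y u hy hu
      simp only [Formula.bv, Finset.mem_insert] at hy hu
      have hzy : ¬ (z = y) := fun h => hy (Or.inl h.symm)
      have hzu : z ≠ u := fun h => hu (Or.inl h.symm)
      simp only [Formula.subst, if_neg hzy, Model.sat]
      apply exists_congr; intro d
      apply and_congr_right; intro _
      rw [ih w (Function.update τ z d) y u (by tauto) (by tauto)]
      have h1 : (Function.update τ z d) u = τ u := by
        simp [Function.update, hzu.symm]
      rw [h1, Function.update_comm (show z ≠ y from hzy) d (τ u) τ]
  | all z φ ih =>
      intro w τ y u hy hu
      simp only [Formula.bv, Finset.mem_insert] at hy hu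
      have hzy : ¬ (z = y) := fun h => hy (Or.inl h.symm)
      have hzu : z ≠ u := fun h => hu (Or.inl h.symm)
      simp only [Formula.subst, if_neg hzy, Model.sat]
      apply forall_congr'; intro d
      apply imp_congr_right; intro _
      rw [ih w (Function.update τ z d) y u (by tauto) (by tauto)]
      have h1 : (Function.update τ z d) u = τ u := by
        simp [Function.update, hzu.symm]
      rw [h1, Function.update_comm (show z ≠ y from hzy) d (τ u) τ]
/-! ### Part B : components, shapes, replacement -/

lemma Formula.bv_of_mem_comps : ∀ (φ β : Formula), β ∈ φ.comps → β.bv ⊆ φ.bv := by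
  intro φ
  induction φ with
  | and φ ψ ih1 ih2 =>
      intro β hβ
      simp only [Formula.comps, Finset.mem_union] at hβ
      rcases hβ with h | h
      · exact (ih1 β h).trans (by simp [Formula.bv])
      · exact (ih2 β h).trans (by simp [Formula.bv])
  | or φ ψ ih1 ih2 =>
      intro β hβ
      simp only [Formula.comps, Finset.mem_union] at hβ
      rcases hβ with h | h
      · exact (ih1 β h).trans (by simp [Formula.bv])
      · exact (ih2 β h).trans (by simp [Formula.bv])
  | ex z φ ih =>
      intro β hβ
      simp only [Formula.comps, Finset.mem_insert] at hβ
      rcases hβ with h | h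
      · subst h; exact subset_rfl
      · exact (ih β h).trans (by simp [Formula.bv, Finset.subset_insert])
  | all z φ ih =>
      intro β hβ
      simp only [Formula.comps, Finset.mem_insert] at hβ
      rcases hβ with h | h
      · subst h; exact subset_rfl
      · exact (ih β h).trans (by simp [Formula.bv, Finset.subset_insert])
  | atom p args => intro β hβ; simp only [Formula.comps, Finset.mem_singleton] at hβ; subst hβ; exact subset_rfl
  | neg φ _ => intro β hβ; simp only [Formula.comps, Finset.mem_singleton] at hβ; subst hβ; exact subset_rfl
  | box φ _ => intro β hβ; simp only [Formula.comps, Finset.mem_singleton] at hβ; subst hβ; exact subset_rfl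
  | dia φ _ => intro β hβ; simp only [Formula.comps, Finset.mem_singleton] at hβ; subst hβ; exact subset_rfl

lemma Formula.size_of_mem_comps : ∀ (φ β : Formula), β ∈ φ.comps → β.size ≤ φ.size := by
  intro φ
  induction φ with
  | and φ ψ ih1 ih2 =>
      intro β hβ
      simp only [Formula.comps, Finset.mem_union] at hβ
      rcases hβ with h | h
      · have := ih1 β h; simp [Formula.size]; omega
      · have := ih2 β h; simp [Formula.size]; omega
  | or φ ψ ih1 ih2 =>
      intro β hβ
      simp only [Formula.comps, Finset.mem_union] at hβ
      rcases hβ with h | h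
      · have := ih1 β h; simp [Formula.size]; omega
      · have := ih2 β h; simp [Formula.size]; omega
  | ex z φ ih =>
      intro β hβ
      simp only [Formula.comps, Finset.mem_insert] at hβ
      rcases hβ with h | h
      · subst h; exact le_rfl
      · have := ih β h; simp [Formula.size]; omega
  | all z φ ih =>
      intro β hβ
      simp only [Formula.comps, Finset.mem_insert] at hβ
      rcases hβ with h | h
      · subst h; exact le_rfl
      · have := ih β h; simp [Formula.size]; omega
  | atom p args => intro β hβ; simp only [Formula.comps, Finset.mem_singleton] at hβ; subst hβ; exact le_rfl
  | neg φ _ => intro β hβ; simp only [Formula.comps, Finset.mem_singleton] at hβ; subst hβ; exact le_rfl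
  | box φ _ => intro β hβ; simp only [Formula.comps, Finset.mem_singleton] at hβ; subst hβ; exact le_rfl
  | dia φ _ => intro β hβ; simp only [Formula.comps, Finset.mem_singleton] at hβ; subst hβ; exact le_rfl

lemma Formula.uB_of_mem_comps : ∀ (φ β : Formula), β ∈ φ.comps → φ.uniqueBinders → β.uniqueBinders := by
  intro φ
  induction φ with
  | and φ ψ ih1 ih2 =>
      intro β hβ hu
      simp only [Formula.comps, Finset.mem_union] at hβ
      rcases hβ with h | h
      · exact ih1 β h hu.1
      · exact ih2 β h hu.2.1
  | or φ ψ ih1 ih2 =>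
      intro β hβ hu
      simp only [Formula.comps, Finset.mem_union] at hβ
      rcases hβ with h | h
      · exact ih1 β h hu.1
      · exact ih2 β h hu.2.1
  | ex z φ ih =>
      intro β hβ hu
      simp only [Formula.comps, Finset.mem_insert] at hβ
      rcases hβ with h | h
      · subst h; exact hu
      · exact ih β h hu.1
  | all z φ ih =>
      intro β hβ hu
      simp only [Formula.comps, Finset.mem_insert] at hβ
      rcases hβ with h | h
      · subst h; exact hu
      · exact ih β h hu.1
  | atom p args => intro β hβ hu; simp only [Formula.comps, Finset.mem_singleton] at hβ; subst hβ; exact hu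
  | neg φ _ => intro β hβ hu; simp only [Formula.comps, Finset.mem_singleton] at hβ; subst hβ; exact hu
  | box φ _ => intro β hβ hu; simp only [Formula.comps, Finset.mem_singleton] at hβ; subst hβ; exact hu
  | dia φ _ => intro β hβ hu; simp only [Formula.comps, Finset.mem_singleton] at hβ; subst hβ; exact hu

/-- the depth-0 shape of (subformulas of) `ABBABE` formulas -/
inductive Sh0 : Formula → Prop where
  | atom (p : ℕ) (args : List ℕ) : Sh0 (.atom p args)
  | natom (p : ℕ) (args : List ℕ) : Sh0 (.neg (.atom p args))
  | and {φ ψ} : Sh0 φ → Sh0 ψ → Sh0 (.and φ ψ)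
  | or {φ ψ} : Sh0 φ → Sh0 ψ → Sh0 (.or φ ψ)
  | box (φ : Formula) : Sh0 (.box φ)
  | dia (φ : Formula) : Sh0 (.dia φ)
  | allBox (z : ℕ) (φ : Formula) : Sh0 (.all z (.box φ))
  | exDia (z : ℕ) (φ : Formula) : Sh0 (.ex z (.dia φ))

def Sh1 (γ : Formula) : Prop :=
  Sh0 γ ∨ ∃ z body, (γ = .all z body ∨ γ = .ex z body) ∧ Sh0 body

lemma abbabe_sh0 {φ : Formula} (h : ABBABE φ) : Sh0 φ := by
  induction h with
  | atom p args => exact Sh0.atom p args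
  | natom p args => exact Sh0.natom p args
  | and _ _ ih1 ih2 => exact Sh0.and ih1 ih2
  | or _ _ ih1 ih2 => exact Sh0.or ih1 ih2
  | box _ _ => exact Sh0.box _
  | dia _ _ => exact Sh0.dia _
  | allBox _ _ => exact Sh0.allBox _ _
  | exDia _ _ => exact Sh0.exDia _ _
  | boxAll _ _ => exact Sh0.box _
  | diaEx _ _ => exact Sh0.dia _
  | boxEx _ _ => exact Sh0.box _
  | diaAll _ _ => exact Sh0.dia _

lemma subf_abbabe_sh1 : ∀ {χ : Formula}, ABBABE χ → ∀ {γ : Formula}, Subf γ χ → Sh1 γ := by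
  intro χ hχ
  induction hχ with
  | atom p args =>
      intro γ hγ; cases hγ; exact Or.inl (Sh0.atom p args)
  | natom p args =>
      intro γ hγ
      cases hγ with
      | refl => exact Or.inl (Sh0.natom p args)
      | neg h => cases h; exact Or.inl (Sh0.atom p args)
  | and h1 h2 ih1 ih2 =>
      intro γ hγ
      cases hγ with
      | refl => exact Or.inl (Sh0.and (abbabe_sh0 h1) (abbabe_sh0 h2))
      | andL h => exact ih1 h
      | andR h => exact ih2 h
  | or h1 h2 ih1 ih2 =>
      intro γ hγ
      cases hγ with
      | refl => exact Or.inl (Sh0.or (abbabe_sh0 h1) (abbabe_sh0 h2))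
      | orL h => exact ih1 h
      | orR h => exact ih2 h
  | box h ih =>
      intro γ hγ
      cases hγ with
      | refl => exact Or.inl (Sh0.box _)
      | box h' => exact ih h'
  | dia h ih =>
      intro γ hγ
      cases hγ with
      | refl => exact Or.inl (Sh0.dia _)
      | dia h' => exact ih h'
  | allBox h ih =>
      intro γ hγ
      cases hγ with
      | refl => exact Or.inl (Sh0.allBox _ _)
      | all h' =>
          cases h' with
          | refl => exact Or.inl (Sh0.box _)
          | box h'' => exact ih h''
  | exDia h ih =>
      intro γ hγ
      cases hγ with
      | refl => exact Or.inl (Sh0.exDia _ _)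
      | ex h' =>
          cases h' with
          | refl => exact Or.inl (Sh0.dia _)
          | dia h'' => exact ih h''
  | boxAll h ih =>
      intro γ hγ
      cases hγ with
      | refl => exact Or.inl (Sh0.box _)
      | box h' =>
          cases h' with
          | refl => exact Or.inr ⟨_, _, Or.inl rfl, abbabe_sh0 h⟩
          | all h'' => exact ih h''
  | diaEx h ih =>
      intro γ hγ
      cases hγ with
      | refl => exact Or.inl (Sh0.dia _)
      | dia h' =>
          cases h' with
          | refl => exact Or.inr ⟨_, _, Or.inr rfl, abbabe_sh0 h⟩
          | ex h'' => exact ih h''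
  | boxEx h ih =>
      intro γ hγ
      cases hγ with
      | refl => exact Or.inl (Sh0.box _)
      | box h' =>
          cases h' with
          | refl => exact Or.inr ⟨_, _, Or.inr rfl, abbabe_sh0 h⟩
          | ex h'' => exact ih h''
  | diaAll h ih =>
      intro γ hγ
      cases hγ with
      | refl => exact Or.inl (Sh0.dia _)
      | dia h' =>
          cases h' with
          | refl => exact Or.inr ⟨_, _, Or.inl rfl, abbabe_sh0 h⟩
          | all h'' => exact ih h''

lemma isSub_sh1 {γ : Formula} (h : IsSubABBABE γ) : Sh1 γ :=
  let ⟨_, hχ, hsub⟩ := h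
  subf_abbabe_sh1 hχ hsub

/-- in a `Sh0` formula, an `∃◇`-component has all its free variables free in the formula -/
lemma Sh0.fv_of_ex_mem_comps {φ : Formula} (h : Sh0 φ) :
    ∀ {z' : ℕ} {β : Formula}, (Formula.ex z' β) ∈ φ.comps → (Formula.ex z' β).fv ⊆ φ.fv := by
  induction h with
  | atom p args => intro z' β hβ; simp only [Formula.comps, Finset.mem_singleton] at hβ; cases hβ
  | natom p args => intro z' β hβ; simp only [Formula.comps, Finset.mem_singleton] at hβ; cases hβ
  | and h1 h2 ih1 ih2 =>
      intro z' β hβ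
      simp only [Formula.comps, Finset.mem_union] at hβ
      rcases hβ with h | h
      · exact (ih1 h).trans (by simp [Formula.fv])
      · exact (ih2 h).trans (by simp [Formula.fv])
  | or h1 h2 ih1 ih2 =>
      intro z' β hβ
      simp only [Formula.comps, Finset.mem_union] at hβ
      rcases hβ with h | h
      · exact (ih1 h).trans (by simp [Formula.fv])
      · exact (ih2 h).trans (by simp [Formula.fv])
  | box φ => intro z' β hβ; simp only [Formula.comps, Finset.mem_singleton] at hβ; cases hβ
  | dia φ => intro z' β hβ; simp only [Formula.comps, Finset.mem_singleton] at hβ; cases hβ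
  | allBox z φ =>
      intro z' β hβ
      simp only [Formula.comps, Finset.mem_insert, Finset.mem_singleton] at hβ
      rcases hβ with h | h <;> cases h
  | exDia z φ =>
      intro z' β hβ
      simp only [Formula.comps, Finset.mem_insert, Finset.mem_singleton] at hβ
      rcases hβ with h | h
      · rw [h]
      · cases h

/-- unfolding lemmas for `replComp` -/
lemma replComp_hit (t r : Formula) : replComp t r t = r := by
  rw [replComp.eq_def, if_pos rfl]

lemma replComp_and {t : Formula} (h : Formula.and a b ≠ t) (r : Formula) :
    replComp t r (.and a b) = .and (replComp t r a) (replComp t r b) := by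
  rw [replComp.eq_def, if_neg h]

lemma replComp_or {t : Formula} (h : Formula.or a b ≠ t) (r : Formula) :
    replComp t r (.or a b) = .or (replComp t r a) (replComp t r b) := by
  rw [replComp.eq_def, if_neg h]

lemma replComp_ex {t : Formula} {z : ℕ} {a : Formula} (h : Formula.ex z a ≠ t) (r : Formula) :
    replComp t r (.ex z a) = .ex z (replComp t r a) := by
  rw [replComp.eq_def, if_neg h]

lemma replComp_all {t : Formula} {z : ℕ} {a : Formula} (h : Formula.all z a ≠ t) (r : Formula) :
    replComp t r (.all z a) = .all z (replComp t r a) := by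
  rw [replComp.eq_def, if_neg h]

lemma replComp_atom {t : Formula} (h : Formula.atom p args ≠ t) (r : Formula) :
    replComp t r (.atom p args) = .atom p args := by
  rw [replComp.eq_def, if_neg h]

lemma replComp_neg {t : Formula} (h : Formula.neg a ≠ t) (r : Formula) :
    replComp t r (.neg a) = .neg a := by
  rw [replComp.eq_def, if_neg h]

lemma replComp_box {t : Formula} (h : Formula.box a ≠ t) (r : Formula) :
    replComp t r (.box a) = .box a := by
  rw [replComp.eq_def, if_neg h]

lemma replComp_dia {t : Formula} (h : Formula.dia a ≠ t) (r : Formula) :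
    replComp t r (.dia a) = .dia a := by
  rw [replComp.eq_def, if_neg h]

/-- if the (existential) component `t` is not a component of `φ`, replacement does nothing -/
lemma replComp_eq_self {z' : ℕ} {β' : Formula} :
    ∀ (φ r : Formula), (Formula.ex z' β') ∉ φ.comps → replComp (.ex z' β') r φ = φ := by
  intro φ
  induction φ with
  | and φ ψ ih1 ih2 =>
      intro r ht
      simp only [Formula.comps, Finset.mem_union, not_or] at ht
      rw [replComp_and (by intro h; cases h) r, ih1 r ht.1, ih2 r ht.2]
  | or φ ψ ih1 ih2 =>
      intro r ht
      simp only [Formula.comps, Finset.mem_union, not_or] at ht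
      rw [replComp_or (by intro h; cases h) r, ih1 r ht.1, ih2 r ht.2]
  | ex z φ ih =>
      intro r ht
      simp only [Formula.comps, Finset.mem_insert, not_or] at ht
      rw [replComp_ex (fun h => ht.1 h.symm) r, ih r ht.2]
  | all z φ ih =>
      intro r ht
      simp only [Formula.comps, Finset.mem_insert, not_or] at ht
      rw [replComp_all (by intro h; cases h) r, ih r ht.2]
  | atom p args => intro r ht; rw [replComp_atom (by intro h; cases h) r]
  | neg φ _ =>
      intro r ht
      simp only [Formula.comps, Finset.mem_singleton] at ht
      rw [replComp_neg (fun h => ht h.symm) r]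
  | box φ _ =>
      intro r ht
      simp only [Formula.comps, Finset.mem_singleton] at ht
      rw [replComp_box (fun h => ht h.symm) r]
  | dia φ _ =>
      intro r ht
      simp only [Formula.comps, Finset.mem_singleton] at ht
      rw [replComp_dia (fun h => ht h.symm) r]

lemma replComp_id : ∀ (φ t : Formula), replComp t t φ = φ := by
  intro φ
  induction φ with
  | and φ ψ ih1 ih2 =>
      intro t
      by_cases h : Formula.and φ ψ = t
      · rw [← h, replComp_hit]
      · rw [replComp_and h, ih1, ih2]
  | or φ ψ ih1 ih2 =>
      intro t
      by_cases h : Formula.or φ ψ = t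
      · rw [← h, replComp_hit]
      · rw [replComp_or h, ih1, ih2]
  | ex z φ ih =>
      intro t
      by_cases h : Formula.ex z φ = t
      · rw [← h, replComp_hit]
      · rw [replComp_ex h, ih]
  | all z φ ih =>
      intro t
      by_cases h : Formula.all z φ = t
      · rw [← h, replComp_hit]
      · rw [replComp_all h, ih]
  | atom p args =>
      intro t
      by_cases h : Formula.atom p args = t
      · rw [← h, replComp_hit]
      · rw [replComp_atom h]
  | neg φ _ =>
      intro t
      by_cases h : Formula.neg φ = t
      · rw [← h, replComp_hit]
      · rw [replComp_neg h]
  | box φ _ =>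
      intro t
      by_cases h : Formula.box φ = t
      · rw [← h, replComp_hit]
      · rw [replComp_box h]
  | dia φ _ =>
      intro t
      by_cases h : Formula.dia φ = t
      · rw [← h, replComp_hit]
      · rw [replComp_dia h]

/-- introduction for a big disjunction -/
lemma bigOr_intro (M : Model) (w : M.W) (τ : ℕ → M.D) :
    ∀ (l : List Formula) (α : Formula), α ∈ l → M.sat w τ α → M.sat w τ (bigOr l) := by
  intro l
  induction l with
  | nil => intro α h; cases h
  | cons β l ih =>
      intro α h hs
      rcases List.mem_cons.mp h with h | h
      · subst h; exact Or.inl hs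
      · exact Or.inr (ih α h hs)

/-- cardinality of free variables is at most the size -/
lemma Formula.card_fv_le_size : ∀ (φ : Formula), φ.fv.card ≤ φ.size := by
  intro φ
  induction φ with
  | atom p args =>
      simp only [Formula.fv, Formula.size]
      calc args.toFinset.card ≤ args.length := args.toFinset_card_le
        _ ≤ 1 + args.length := by omega
  | neg φ ih => simp only [Formula.fv, Formula.size]; omega
  | and φ ψ ih1 ih2 =>
      simp only [Formula.fv, Formula.size]
      calc (φ.fv ∪ ψ.fv).card ≤ φ.fv.card + ψ.fv.card := Finset.card_union_le _ _
        _ ≤ φ.size + ψ.size + 1 := by omega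
  | or φ ψ ih1 ih2 =>
      simp only [Formula.fv, Formula.size]
      calc (φ.fv ∪ ψ.fv).card ≤ φ.fv.card + ψ.fv.card := Finset.card_union_le _ _
        _ ≤ φ.size + ψ.size + 1 := by omega
  | box φ ih => simp only [Formula.fv, Formula.size]; omega
  | dia φ ih => simp only [Formula.fv, Formula.size]; omega
  | ex z φ ih =>
      simp only [Formula.fv, Formula.size]
      have := Finset.card_erase_le (a := z) (s := φ.fv)
      omega
  | all z φ ih =>
      simp only [Formula.fv, Formula.size]
      have := Finset.card_erase_le (a := z) (s := φ.fv)
      omega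

/-- cardinality of the component set is at most the size -/
lemma Formula.card_comps_le_size : ∀ (φ : Formula), φ.comps.card ≤ φ.size := by
  intro φ
  induction φ with
  | and φ ψ ih1 ih2 =>
      simp only [Formula.comps, Formula.size]
      calc (φ.comps ∪ ψ.comps).card ≤ φ.comps.card + ψ.comps.card := Finset.card_union_le _ _
        _ ≤ φ.size + ψ.size + 1 := by omega
  | or φ ψ ih1 ih2 =>
      simp only [Formula.comps, Formula.size]
      calc (φ.comps ∪ ψ.comps).card ≤ φ.comps.card + ψ.comps.card := Finset.card_union_le _ _
        _ ≤ φ.size + ψ.size + 1 := by omega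
  | ex z φ ih =>
      simp only [Formula.comps, Formula.size]
      have := Finset.card_insert_le (Formula.ex z φ) φ.comps
      omega
  | all z φ ih =>
      simp only [Formula.comps, Formula.size]
      have := Finset.card_insert_le (Formula.all z φ) φ.comps
      omega
  | atom p args =>
      simp only [Formula.comps, Formula.size]
      rw [Finset.card_singleton]; omega
  | neg φ _ => simp only [Formula.comps, Formula.size]; rw [Finset.card_singleton]; have := Formula.size_pos φ; omega
  | box φ _ => simp only [Formula.comps, Formula.size]; rw [Finset.card_singleton]; have := Formula.size_pos φ; omega
  | dia φ _ => simp only [Formula.comps, Formula.size]; rw [Finset.card_singleton]; have := Formula.size_pos φ; omega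
/-! ### Part C : model constructions and satisfaction transfer -/

/-- generic transfer along a family of surjections -/
lemma Model.sat_transfer (N M : Model) (Ok : N.W → Prop)
    (F : N.W → M.W) (g : N.W → N.D → M.D)
    (hOk : ∀ u u', Ok u → N.R u u' → Ok u')
    (hsur : ∀ u, Ok u → Function.Surjective (g u))
    (hdom : ∀ u, Ok u → ∀ d, d ∈ N.dom u ↔ g u d ∈ M.dom (F u))
    (hρ : ∀ u, Ok u → ∀ p l, l ∈ N.ρ u p ↔ l.map (g u) ∈ M.ρ (F u) p)
    (hR1 : ∀ u u', Ok u → N.R u u' → M.R (F u) (F u'))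
    (hg1 : ∀ u u', Ok u → N.R u u' → g u' = g u)
    (hR2 : ∀ u v', Ok u → M.R (F u) v' → ∃ u', N.R u u' ∧ F u' = v' ∧ g u' = g u) :
    ∀ (θ : Formula) (u : N.W) (τ : ℕ → N.D), Ok u →
      (N.sat u τ θ ↔ M.sat (F u) (fun z => g u (τ z)) θ) := by
  intro θ
  induction θ with
  | atom p args =>
      intro u τ hu
      simp only [Model.sat]
      rw [hρ u hu p (args.map τ), List.map_map]
      rfl
  | neg φ ih =>
      intro u τ hu
      simp only [Model.sat]
      rw [ih u τ hu]
  | and φ ψ ih1 ih2 =>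
      intro u τ hu
      simp only [Model.sat]
      rw [ih1 u τ hu, ih2 u τ hu]
  | or φ ψ ih1 ih2 =>
      intro u τ hu
      simp only [Model.sat]
      rw [ih1 u τ hu, ih2 u τ hu]
  | box φ ih =>
      intro u τ hu
      simp only [Model.sat]
      constructor
      · intro h v' hv'
        obtain ⟨u', hu', hF, hg⟩ := hR2 u v' hu hv'
        have := (ih u' τ (hOk u u' hu hu')).mp (h u' hu')
        rw [hF, hg] at this
        exact this
      · intro h u' hu'
        rw [ih u' τ (hOk u u' hu hu'), hg1 u u' hu hu']
        exact h (F u') (hR1 u u' hu hu')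
  | dia φ ih =>
      intro u τ hu
      simp only [Model.sat]
      constructor
      · rintro ⟨u', hu', hs⟩
        refine ⟨F u', hR1 u u' hu hu', ?_⟩
        rw [← hg1 u u' hu hu']
        exact (ih u' τ (hOk u u' hu hu')).mp hs
      · rintro ⟨v', hv', hs⟩
        obtain ⟨u', hu', hF, hg⟩ := hR2 u v' hu hv'
        refine ⟨u', hu', ?_⟩
        rw [ih u' τ (hOk u u' hu hu'), hF, hg]
        exact hs
  | ex z φ ih =>
      intro u τ hu
      simp only [Model.sat]
      constructor
      · rintro ⟨d, hd, hs⟩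
        refine ⟨g u d, (hdom u hu d).mp hd, ?_⟩
        have := (ih u (Function.update τ z d) hu).mp hs
        have heq : (fun z' => g u (Function.update τ z d z'))
            = Function.update (fun z' => g u (τ z')) z (g u d) := by
          funext z'
          by_cases h : z' = z <;> simp [h, Function.update]
        rwa [heq] at this
      · rintro ⟨e, he, hs⟩
        obtain ⟨d, rfl⟩ := hsur u hu e
        refine ⟨d, (hdom u hu d).mpr he, ?_⟩
        rw [ih u (Function.update τ z d) hu]
        have heq : (fun z' => g u (Function.update τ z d z'))
            = Function.update (fun z' => g u (τ z')) z (g u d) := by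
          funext z'
          by_cases h : z' = z <;> simp [h, Function.update]
        rwa [heq]
  | all z φ ih =>
      intro u τ hu
      simp only [Model.sat]
      constructor
      · intro h e he
        obtain ⟨d, rfl⟩ := hsur u hu e
        have := (ih u (Function.update τ z d) hu).mp (h d ((hdom u hu d).mpr he))
        have heq : (fun z' => g u (Function.update τ z d z'))
            = Function.update (fun z' => g u (τ z')) z (g u d) := by
          funext z'
          by_cases hz : z' = z <;> simp [hz, Function.update]
        rwa [heq] at this
      · intro h d hd
        rw [ih u (Function.update τ z d) hu]
        have heq : (fun z' => g u (Function.update τ z d z'))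
            = Function.update (fun z' => g u (τ z')) z (g u d) := by
          funext z'
          by_cases hz : z' = z <;> simp [hz, Function.update]
        rw [heq]
        exact h (g u d) ((hdom u hu d).mp hd)

/-- collapse of the duplicated domain -/
def clps {D : Type} : D ⊕ D → D := Sum.elim id id

lemma clps_surj {D : Type} : Function.Surjective (clps (D := D)) :=
  fun d => ⟨Sum.inl d, rfl⟩

/-- the shadow model: every domain element is duplicated -/
def shadow (M : Model) : Model where
  W := M.W
  D := M.D ⊕ M.D
  R := M.R
  dom := fun v => {d | clps d ∈ M.dom v}
  ρ := fun v p => {l | l.map clps ∈ M.ρ v p}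

lemma shadow_sat (M : Model) (θ : Formula) (v : M.W) (τ : ℕ → M.D ⊕ M.D) :
    (shadow M).sat v τ θ ↔ M.sat v (fun z => clps (τ z)) θ := by
  exact Model.sat_transfer (shadow M) M (fun _ => True) id (fun _ => clps)
    (fun _ _ _ _ => trivial) (fun _ _ => clps_surj)
    (fun u _ d => Iff.rfl) (fun u _ p l => Iff.rfl)
    (fun u u' _ h => h) (fun _ _ _ _ => rfl)
    (fun u v' _ h => ⟨v', h, rfl, rfl⟩) θ v τ trivial

/-- a transposition, defined with classical decidability -/
noncomputable def swp {D : Type} (p : D × D) : D → D := fun d =>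
  letI := Classical.decEq D
  if d = p.1 then p.2 else if d = p.2 then p.1 else d

lemma swp_fst {D : Type} (p : D × D) : swp p p.1 = p.2 := by
  simp [swp]

lemma swp_snd {D : Type} (p : D × D) : swp p p.2 = p.1 := by
  letI := Classical.decEq D
  unfold swp
  by_cases h : p.2 = p.1
  · rw [if_pos h, h]
  · rw [if_neg h, if_pos rfl]

lemma swp_other {D : Type} (p : D × D) (d : D) (h1 : d ≠ p.1) (h2 : d ≠ p.2) :
    swp p d = d := by
  letI := Classical.decEq D
  unfold swp
  rw [if_neg h1, if_neg h2]

lemma swp_invol {D : Type} (p : D × D) (d : D) : swp p (swp p d) = d := by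
  letI := Classical.decEq D
  by_cases h1 : d = p.1
  · subst h1; rw [swp_fst, swp_snd]
  · by_cases h2 : d = p.2
    · subst h2; rw [swp_snd, swp_fst]
    · rw [swp_other p d h1 h2, swp_other p d h1 h2]

lemma swp_surj {D : Type} (p : D × D) : Function.Surjective (swp p) :=
  fun d => ⟨swp p d, swp_invol p d⟩

lemma swp_mem {D : Type} (p : D × D) (S : Set D) (hp1 : p.1 ∈ S) (hp2 : p.2 ∈ S)
    (d : D) (hd : d ∈ S) : swp p d ∈ S := by
  by_cases h1 : d = p.1
  · subst h1; rw [swp_fst]; exact hp2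
  · by_cases h2 : d = p.2
    · subst h2; rw [swp_snd]; exact hp1
    · rw [swp_other p d h1 h2]; exact hd

/-- the extension of a model `K` with a new root (duplicating `w`) and swapped
copies of the `K`-successors of `w` -/
noncomputable def extend (K : Model) (w : K.W) (Good : K.D × K.D → Prop) : Model where
  W := Option (K.W ⊕ (K.W × (K.D × K.D)))
  D := K.D
  R := fun u u' => match u, u' with
    | none, some (Sum.inl v) => K.R w v
    | none, some (Sum.inr (v, p)) => K.R w v ∧ Good p
    | some (Sum.inl v), some (Sum.inl v') => K.R v v'
    | some (Sum.inr (v, p)), some (Sum.inr (v', p')) => K.R v v' ∧ p' = p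
    | _, _ => False
  dom := fun u => match u with
    | none => K.dom w
    | some (Sum.inl v) => K.dom v
    | some (Sum.inr (v, p)) => {d | swp p d ∈ K.dom v}
  ρ := fun u P => match u with
    | none => K.ρ w P
    | some (Sum.inl v) => K.ρ v P
    | some (Sum.inr (v, p)) => {l | l.map (swp p) ∈ K.ρ v P}

lemma extend_sat (K : Model) (w : K.W) (Good : K.D × K.D → Prop) :
    ∀ (θ : Formula) (s : K.W ⊕ (K.W × (K.D × K.D))) (τ : ℕ → K.D),
      ((extend K w Good).sat (some s) τ θ ↔
        K.sat (Sum.elim id Prod.fst s)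
          (fun z => Sum.elim (fun _ => id) (fun q => swp q.2) s (τ z)) θ) := by
  intro θ s τ
  exact Model.sat_transfer (extend K w Good) K (fun u => u ≠ none)
    (fun u => match u with
      | none => w
      | some s' => Sum.elim id Prod.fst s')
    (fun u => match u with
      | none => id
      | some s' => Sum.elim (fun _ => id) (fun q => swp q.2) s')
    (by rintro u u' hu hR
        match u, u' with
        | some (Sum.inl v), none => exact (by cases hR)
        | some (Sum.inr (v, p)), none => exact (by cases hR)
        | some _, some _ => exact Option.some_ne_none _
        | none, u' => exact absurd rfl hu)
    (by rintro u hu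
        match u with
        | none => exact absurd rfl hu
        | some (Sum.inl v) => exact fun d => ⟨d, rfl⟩
        | some (Sum.inr (v, p)) => exact swp_surj p)
    (by rintro u hu d
        match u with
        | none => exact absurd rfl hu
        | some (Sum.inl v) => exact Iff.rfl
        | some (Sum.inr (v, p)) => exact Iff.rfl)
    (by rintro u hu p l
        match u with
        | none => exact absurd rfl hu
        | some (Sum.inl v) => simp [extend]; exact Iff.rfl
        | some (Sum.inr (v, q)) => exact Iff.rfl)
    (by rintro u u' hu hR
        match u, u' with
        | some (Sum.inl v), some (Sum.inl v') => exact hR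
        | some (Sum.inl v), some (Sum.inr (v', p')) => exact (by cases hR)
        | some (Sum.inl v), none => exact (by cases hR)
        | some (Sum.inr (v, p)), some (Sum.inr (v', p')) => exact hR.1
        | some (Sum.inr (v, p)), some (Sum.inl v') => exact (by cases hR)
        | some (Sum.inr (v, p)), none => exact (by cases hR)
        | none, _ => exact absurd rfl hu)
    (by rintro u u' hu hR
        match u, u' with
        | some (Sum.inl v), some (Sum.inl v') => rfl
        | some (Sum.inl v), some (Sum.inr (v', p')) => exact (by cases hR)
        | some (Sum.inl v), none => exact (by cases hR)
        | some (Sum.inr (v, p)), some (Sum.inr (v', p')) =>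
            rw [show p' = p from hR.2]
            rfl
        | some (Sum.inr (v, p)), some (Sum.inl v') => exact (by cases hR)
        | some (Sum.inr (v, p)), none => exact (by cases hR)
        | none, _ => exact absurd rfl hu)
    (by rintro u v' hu hR
        match u with
        | none => exact absurd rfl hu
        | some (Sum.inl v) => exact ⟨some (Sum.inl v'), hR, rfl, rfl⟩
        | some (Sum.inr (v, p)) => exact ⟨some (Sum.inr (v', p)), ⟨hR, rfl⟩, rfl, rfl⟩)
    θ (some s) τ (Option.some_ne_none _)

lemma extend_sat_inl (K : Model) (w : K.W) (Good : K.D × K.D → Prop)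
    (θ : Formula) (v : K.W) (τ : ℕ → K.D) :
    (extend K w Good).sat (some (Sum.inl v)) τ θ ↔ K.sat v τ θ := by
  exact extend_sat K w Good θ (Sum.inl v) τ

lemma extend_sat_inr (K : Model) (w : K.W) (Good : K.D × K.D → Prop)
    (θ : Formula) (v : K.W) (p : K.D × K.D) (τ : ℕ → K.D) :
    (extend K w Good).sat (some (Sum.inr (v, p))) τ θ ↔
      K.sat v (fun z => swp p (τ z)) θ := by
  exact extend_sat K w Good θ (Sum.inr (v, p)) τ
attribute [reducible] shadow extend
/-! ### Part D : increasingness, exChain -/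

lemma shadow_increasing (M : Model) (hM : M.Increasing) : (shadow M).Increasing := by
  obtain ⟨h1, h2, h3, h4, h5, h6, h7⟩ := hM
  haveI := h3; haveI := h4
  refine ⟨h1, ⟨Sum.inl h2.some⟩, h3,
    (by change Countable (M.D ⊕ M.D); exact inferInstance), ?_, ?_, ?_⟩
  · intro w
    obtain ⟨d, hd⟩ := h5 w
    exact ⟨Sum.inl d, hd⟩
  · intro w v hR d hd
    exact h6 w v hR hd
  · intro w p l hl d hd
    exact h7 w p (l.map clps) hl (clps d) (List.mem_map_of_mem (f := clps) hd)

lemma extend_increasing (K : Model) (w : K.W) (Good : K.D × K.D → Prop)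
    (hK : K.Increasing)
    (hGood : ∀ p, Good p → p.1 ∈ K.dom w ∧ p.2 ∈ K.dom w) :
    (extend K w Good).Increasing := by
  obtain ⟨h1, h2, h3, h4, h5, h6, h7⟩ := hK
  haveI := h3; haveI := h4
  refine ⟨⟨none⟩, h2,
    (by change Countable (Option (K.W ⊕ (K.W × (K.D × K.D)))); exact inferInstance),
    h4, ?_, ?_, ?_⟩
  · rintro (_ | s)
    · exact h5 w
    · rcases s with v | ⟨v, p⟩
      · exact h5 v
      · obtain ⟨d, hd⟩ := h5 v
        exact ⟨swp p d, by show swp p (swp p d) ∈ K.dom v; rw [swp_invol]; exact hd⟩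
  · rintro u u' hR
    match u, u' with
    | none, some (Sum.inl v) => exact fun d hd => h6 w v hR hd
    | none, some (Sum.inr (v, p)) =>
        intro d hd
        have hsw : swp p d ∈ K.dom w :=
          swp_mem p (K.dom w) (hGood p hR.2).1 (hGood p hR.2).2 d hd
        exact h6 w v hR.1 hsw
    | some (Sum.inl v), some (Sum.inl v') => exact fun d hd => h6 v v' hR hd
    | some (Sum.inr (v, p)), some (Sum.inr (v', p')) =>
        intro d hd
        have : p' = p := hR.2
        subst this
        exact h6 v v' hR.1 hd
    | none, none => exact (by cases hR)
    | some (Sum.inl v), none => exact (by cases hR)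
    | some (Sum.inr (v, p)), none => exact (by cases hR)
    | some (Sum.inl v), some (Sum.inr _) => exact (by cases hR)
    | some (Sum.inr (v, p)), some (Sum.inl _) => exact (by cases hR)
  · rintro (_ | s) P l hl d hd
    · exact h7 w P l hl d hd
    · rcases s with v | ⟨v, p⟩
      · exact h7 v P l hl d hd
      · have : swp p d ∈ l.map (swp p) := List.mem_map_of_mem (f := _) hd
        exact h7 v P (l.map (swp p)) hl (swp p d) this

/-- sequential updates realizing the existential prefix -/
def seqUpd {D : Type} (val : ℕ → D) : List (ℕ × ℕ) → (ℕ → D) → (ℕ → D)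
  | [], σ₀ => σ₀
  | p :: rest, σ₀ =>
      seqUpd val rest (Function.update (Function.update σ₀ p.1 (val p.1)) p.2 (val p.2))

lemma exChain_sat (M : Model) (w : M.W) (θ : Formula) (val : ℕ → M.D) :
    ∀ (ys : List (ℕ × ℕ)) (σ₀ : ℕ → M.D),
      (∀ p ∈ ys, val p.1 ∈ M.dom w ∧ val p.2 ∈ M.dom w) →
      M.sat w (seqUpd val ys σ₀) θ → M.sat w σ₀ (exChain ys θ) := by
  intro ys
  induction ys with
  | nil => intro σ₀ _ h; exact h
  | cons p rest ih =>
      intro σ₀ hval h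
      refine ⟨val p.1, (hval p ((List.mem_cons_self (a := p) (l := rest)))).1, ?_⟩
      refine ⟨val p.2, ?_, ?_⟩
      · have h2 := (hval p ((List.mem_cons_self (a := p) (l := rest)))).2
        by_cases hp : p.2 = p.1
        · simpa [Function.update, hp] using h2
        · simpa [Function.update, hp] using h2
      · exact ih _ (fun q hq => hval q (List.mem_cons_of_mem p hq)) h

lemma seqUpd_notmem {D : Type} (val : ℕ → D) :
    ∀ (ys : List (ℕ × ℕ)) (σ₀ : ℕ → D) (z : ℕ),
      (∀ p ∈ ys, p.1 ≠ z ∧ p.2 ≠ z) → seqUpd val ys σ₀ z = σ₀ z := by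
  intro ys
  induction ys with
  | nil => intro σ₀ z _; rfl
  | cons p rest ih =>
      intro σ₀ z h
      rw [seqUpd, ih _ z (fun q hq => h q (List.mem_cons_of_mem p hq))]
      have h1 := h p ((List.mem_cons_self (a := p) (l := rest)))
      rw [Function.update_of_ne (fun hc : z = p.2 => h1.2 hc.symm),
        Function.update_of_ne (fun hc : z = p.1 => h1.1 hc.symm)]

lemma seqUpd_mem {D : Type} (val : ℕ → D) :
    ∀ (ys : List (ℕ × ℕ)), (ys.map Prod.fst ++ ys.map Prod.snd).Nodup →
      ∀ (σ₀ : ℕ → D), ∀ p ∈ ys,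
        seqUpd val ys σ₀ p.1 = val p.1 ∧ seqUpd val ys σ₀ p.2 = val p.2 := by
  intro ys
  induction ys with
  | nil => intro _ σ₀ p hp; cases hp
  | cons q rest ih =>
      intro hnd σ₀ p hp
      rw [List.map_cons, List.map_cons, List.nodup_append] at hnd
      obtain ⟨hl, hr, hdisj⟩ := hnd
      rw [List.nodup_cons] at hl hr
      have hq12 : q.1 ≠ q.2 := by
        intro hc
        exact hdisj _ List.mem_cons_self _ List.mem_cons_self hc
      have hq1r : q.1 ∉ rest.map Prod.snd := fun hc =>
        hdisj _ List.mem_cons_self _ (List.mem_cons_of_mem _ hc) rfl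
      have hq2l : q.2 ∉ rest.map Prod.fst := fun hc =>
        hdisj _ (List.mem_cons_of_mem _ hc) _ List.mem_cons_self rfl
      rcases List.mem_cons.mp hp with rfl | hp'
      · constructor
        · rw [seqUpd, seqUpd_notmem]
          · rw [Function.update_of_ne hq12, Function.update_self]
          · intro r hr'
            exact ⟨fun hc => hl.1 (hc ▸ List.mem_map_of_mem (f := Prod.fst) hr'),
              fun hc => hq1r (hc ▸ List.mem_map_of_mem (f := Prod.snd) hr')⟩
        · rw [seqUpd, seqUpd_notmem]
          · rw [Function.update_self]
          · intro r hr'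
            exact ⟨fun hc => hq2l (hc ▸ List.mem_map_of_mem (f := Prod.fst) hr'),
              fun hc => hr.1 (hc ▸ List.mem_map_of_mem (f := Prod.snd) hr')⟩
      · rw [seqUpd]
        apply ih _ _ p hp'
        rw [List.nodup_append]
        exact ⟨hl.2, hr.2, fun a ha b hb =>
          hdisj a (List.mem_cons_of_mem _ ha) b (List.mem_cons_of_mem _ hb)⟩
/-! ### Part E : the root satisfaction lemma -/

lemma root_sat (K : Model) (w : K.W) (Good : K.D × K.D → Prop)
    (σA : ℕ → K.D) (Fset : Finset ℕ) (Idx : Formula → Prop)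
    (y : ℕ) (ψ r : Formula) (z₀ : ℕ) (ζ : K.D)
    (hGood : ∀ p, Good p → p.1 ∈ K.dom w ∧ p.2 ∈ K.dom w)
    (hFfix : ∀ p, Good p → ∀ z ∈ Fset, swp p (σA z) = σA z)
    (hζ : ζ ∈ K.dom w)
    (htrans : ∀ β p, Good p → Idx β → (∀ z ∈ β.fv, z = z₀ ∨ z ∈ Fset) →
        K.sat w (Function.update σA z₀ ζ) β →
        K.sat w (Function.update σA z₀ (swp p ζ)) β)
    (hLeaf : Idx (Formula.ex y (.dia ψ)) →
        K.sat w (Function.update σA z₀ ζ) (Formula.ex y (.dia ψ)) →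
        (extend K w Good).sat none (Function.update σA z₀ ζ) r) :
    ∀ θ, Sh0 θ → (∀ z ∈ θ.fv, z = z₀ ∨ z ∈ Fset) → (∀ β ∈ θ.comps, Idx β) →
      K.sat w (Function.update σA z₀ ζ) θ →
      (extend K w Good).sat none (Function.update σA z₀ ζ)
        (replComp (Formula.ex y (.dia ψ)) r θ) := by
  intro θ hSh
  induction hSh with
  | atom p args =>
      intro _ _ hsat
      rw [replComp_atom (by intro h; cases h) r]
      exact hsat
  | natom p args =>
      intro _ _ hsat
      rw [replComp_neg (by intro h; cases h) r]
      exact hsat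
  | and h1 h2 ih1 ih2 =>
      intro hfv hIdx hsat
      rw [replComp_and (by intro h; cases h) r]
      exact ⟨ih1 (fun z hz => hfv z (by simp [Formula.fv, hz]))
          (fun β hβ => hIdx β (by simp [Formula.comps, hβ])) hsat.1,
        ih2 (fun z hz => hfv z (by simp [Formula.fv, hz]))
          (fun β hβ => hIdx β (by simp [Formula.comps, hβ])) hsat.2⟩
  | or h1 h2 ih1 ih2 =>
      intro hfv hIdx hsat
      rw [replComp_or (by intro h; cases h) r]
      rcases hsat with hs | hs
      · exact Or.inl (ih1 (fun z hz => hfv z (by simp [Formula.fv, hz]))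
          (fun β hβ => hIdx β (by simp [Formula.comps, hβ])) hs)
      · exact Or.inr (ih2 (fun z hz => hfv z (by simp [Formula.fv, hz]))
          (fun β hβ => hIdx β (by simp [Formula.comps, hβ])) hs)
  | box β =>
      intro hfv hIdx hsat
      rw [replComp_box (by intro h; cases h) r]
      intro u' hR
      match u', hR with
      | some (Sum.inl v), hR =>
          refine (extend_sat_inl _ _ _ _ _ _).mpr ?_
          exact hsat v hR
      | some (Sum.inr (v, p)), hR =>
          refine (extend_sat_inr _ _ _ _ _ _ _).mpr ?_
          have hIdxβ : Idx (Formula.box β) := hIdx _ (by simp [Formula.comps])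
          have htr := htrans (Formula.box β) p hR.2 hIdxβ
            (fun z hz => hfv z (by simpa [Formula.fv] using hz)) hsat
          have hsv := htr v hR.1
          have hagree : ∀ z ∈ β.fv,
              Function.update σA z₀ (swp p ζ) z = swp p (Function.update σA z₀ ζ z) := by
            intro z hz
            by_cases hzz : z = z₀
            · subst hzz; simp [Function.update]
            · rw [Function.update_of_ne hzz, Function.update_of_ne hzz]
              rcases hfv z (by simpa [Formula.fv] using hz) with h | h
              · exact absurd h hzz
              · exact (hFfix p hR.2 z h).symm
          exact (K.sat_congr β v _ _ hagree).mp hsv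
  | dia β =>
      intro hfv hIdx hsat
      rw [replComp_dia (by intro h; cases h) r]
      obtain ⟨v, hRv, hs⟩ := hsat
      exact ⟨some (Sum.inl v), hRv, (extend_sat_inl K w Good β v _).mpr hs⟩
  | allBox z' β =>
      intro hfv hIdx hsat
      rw [replComp_all (by intro h; cases h) r,
        replComp_box (by intro h; cases h) r]
      intro d hd
      intro u' hR
      match u', hR with
      | some (Sum.inl v), hR =>
          refine (extend_sat_inl _ _ _ _ _ _).mpr ?_
          exact hsat d hd v hR
      | some (Sum.inr (v, p)), hR =>
          refine (extend_sat_inr _ _ _ _ _ _ _).mpr ?_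
          have hIdxθ : Idx (Formula.all z' (.box β)) :=
            hIdx _ (by simp [Formula.comps])
          have htr := htrans (Formula.all z' (.box β)) p hR.2 hIdxθ
            (fun z hz => hfv z hz) hsat
          have hdd : swp p d ∈ K.dom w :=
            swp_mem p (K.dom w) (hGood p hR.2).1 (hGood p hR.2).2 d hd
          have hsv := htr (swp p d) hdd v hR.1
          have hagree : ∀ z ∈ β.fv,
              Function.update (Function.update σA z₀ (swp p ζ)) z' (swp p d) z
                = swp p (Function.update (Function.update σA z₀ ζ) z' d z) := by
            intro z hz
            by_cases hzz' : z = z'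
            · subst hzz'; simp [Function.update]
            · rw [Function.update_of_ne hzz', Function.update_of_ne hzz']
              by_cases hzz : z = z₀
              · subst hzz; simp [Function.update]
              · rw [Function.update_of_ne hzz, Function.update_of_ne hzz]
                have hz2 : z ∈ (Formula.all z' (Formula.box β)).fv := by
                  simp [Formula.fv, Finset.mem_erase, hzz', hz]
                rcases hfv z hz2 with h | h
                · exact absurd h hzz
                · exact (hFfix p hR.2 z h).symm
          exact (K.sat_congr β v _ _ hagree).mp hsv
  | exDia z' β =>
      intro hfv hIdx hsat
      by_cases hteq : Formula.ex z' (.dia β) = Formula.ex y (.dia ψ)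
      · rw [hteq, replComp_hit]
        exact hLeaf (hteq ▸ hIdx _ (by simp [Formula.comps])) (hteq ▸ hsat)
      · rw [replComp_ex hteq r, replComp_dia (by intro h; cases h) r]
        obtain ⟨d, hd, v, hRv, hs⟩ := hsat
        exact ⟨d, hd, some (Sum.inl v), hRv, (extend_sat_inl K w Good β v _).mpr hs⟩
/-! ### Part F : pair-valued sequential updates -/

def seqUpd2 {D : Type} : List ((ℕ × ℕ) × (D × D)) → (ℕ → D) → (ℕ → D)
  | [], σ₀ => σ₀
  | (pos, v) :: rest, σ₀ =>
      seqUpd2 rest (Function.update (Function.update σ₀ pos.1 v.1) pos.2 v.2)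

lemma exChain_sat2 (M : Model) (w : M.W) (θ : Formula) :
    ∀ (zs : List ((ℕ × ℕ) × (M.D × M.D))) (σ₀ : ℕ → M.D),
      (∀ q ∈ zs, q.2.1 ∈ M.dom w ∧ q.2.2 ∈ M.dom w) →
      M.sat w (seqUpd2 zs σ₀) θ → M.sat w σ₀ (exChain (zs.map Prod.fst) θ) := by
  intro zs
  induction zs with
  | nil => intro σ₀ _ h; exact h
  | cons q rest ih =>
      intro σ₀ hval h
      refine ⟨q.2.1, (hval q ((List.mem_cons_self (a := q) (l := rest)))).1, ?_⟩
      refine ⟨q.2.2, ?_, ?_⟩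
      · have h2 := (hval q ((List.mem_cons_self (a := q) (l := rest)))).2
        by_cases hp : q.1.2 = q.1.1
        · simpa [Function.update, hp] using h2
        · simpa [Function.update, hp] using h2
      · exact ih _ (fun q' hq' => hval q' (List.mem_cons_of_mem q hq')) h

lemma seqUpd2_notmem {D : Type} :
    ∀ (zs : List ((ℕ × ℕ) × (D × D))) (σ₀ : ℕ → D) (z : ℕ),
      (∀ q ∈ zs, q.1.1 ≠ z ∧ q.1.2 ≠ z) → seqUpd2 zs σ₀ z = σ₀ z := by
  intro zs
  induction zs with
  | nil => intro σ₀ z _; rfl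
  | cons q rest ih =>
      intro σ₀ z h
      rw [seqUpd2, ih _ z (fun q' hq' => h q' (List.mem_cons_of_mem q hq'))]
      have h1 := h q ((List.mem_cons_self (a := q) (l := rest)))
      rw [Function.update_of_ne (fun hc : z = q.1.2 => h1.2 hc.symm),
        Function.update_of_ne (fun hc : z = q.1.1 => h1.1 hc.symm)]

lemma seqUpd2_mem {D : Type} :
    ∀ (zs : List ((ℕ × ℕ) × (D × D))),
      ((zs.map Prod.fst).map Prod.fst ++ (zs.map Prod.fst).map Prod.snd).Nodup →
      ∀ (σ₀ : ℕ → D), ∀ q ∈ zs,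
        seqUpd2 zs σ₀ q.1.1 = q.2.1 ∧ seqUpd2 zs σ₀ q.1.2 = q.2.2 := by
  intro zs
  induction zs with
  | nil => intro _ σ₀ q hq; cases hq
  | cons q0 rest ih =>
      intro hnd σ₀ q hq
      rw [List.map_cons, List.map_cons, List.map_cons, List.nodup_append] at hnd
      obtain ⟨hl, hr, hdisj⟩ := hnd
      rw [List.nodup_cons] at hl hr
      have hq12 : q0.1.1 ≠ q0.1.2 := by
        intro hc
        exact hdisj _ List.mem_cons_self _ List.mem_cons_self hc
      have hq1r : q0.1.1 ∉ (rest.map Prod.fst).map Prod.snd := fun hc =>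
        hdisj _ List.mem_cons_self _ (List.mem_cons_of_mem _ hc) rfl
      have hq2l : q0.1.2 ∉ (rest.map Prod.fst).map Prod.fst := fun hc =>
        hdisj _ (List.mem_cons_of_mem _ hc) _ List.mem_cons_self rfl
      rcases List.mem_cons.mp hq with rfl | hq'
      · constructor
        · rw [seqUpd2, seqUpd2_notmem]
          · rw [Function.update_of_ne hq12, Function.update_self]
          · intro q' hq''
            exact ⟨fun hc => hl.1 (hc ▸ List.mem_map_of_mem (f := Prod.fst)
                (List.mem_map_of_mem (f := Prod.fst) hq'')),
              fun hc => hq1r (hc ▸ List.mem_map_of_mem (f := Prod.snd)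
                (List.mem_map_of_mem (f := Prod.fst) hq''))⟩
        · rw [seqUpd2, seqUpd2_notmem]
          · rw [Function.update_self]
          · intro q' hq''
            exact ⟨fun hc => hq2l (hc ▸ List.mem_map_of_mem (f := Prod.fst)
                (List.mem_map_of_mem (f := Prod.fst) hq'')),
              fun hc => hr.1 (hc ▸ List.mem_map_of_mem (f := Prod.snd)
                (List.mem_map_of_mem (f := Prod.fst) hq''))⟩
      · rw [seqUpd2]
        apply ih _ _ q hq'
        rw [List.nodup_append]
        exact ⟨hl.2, hr.2, fun a ha b hb =>
          hdisj a (List.mem_cons_of_mem _ ha) b (List.mem_cons_of_mem _ hb)⟩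

lemma nat_add_three_le_two_pow : ∀ n : ℕ, 3 ≤ n → n + 3 ≤ 2 ^ n := by
  intro n
  induction n with
  | zero => omega
  | succ m ih =>
      intro h
      by_cases hm : 3 ≤ m
      · have := ih hm
        have h2 : 2 ^ m ≥ 4 := by
          calc 2 ^ m ≥ 2 ^ 3 := Nat.pow_le_pow_right (by omega) hm
            _ = 8 := by norm_num
            _ ≥ 4 := by omega
        rw [pow_succ]
        omega
      · have hm3 : m = 2 := by omega
        subst hm3
        norm_num
/-! ### Part G : the type index -/

def contrib : Formula → Finset (ℕ × Formula)
  | .all z b => b.comps.image (fun β => (z, β))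
  | .ex z b => b.comps.image (fun β => (z, β))
  | _ => ∅

lemma contrib_card (γ : Formula) : (contrib γ).card ≤ γ.size - 2 := by
  cases γ with
  | all z b =>
      calc (contrib (.all z b)).card ≤ b.comps.card := Finset.card_image_le
        _ ≤ b.size := Formula.card_comps_le_size b
        _ ≤ (Formula.all z b).size - 2 := by simp [Formula.size]
  | ex z b =>
      calc (contrib (.ex z b)).card ≤ b.comps.card := Finset.card_image_le
        _ ≤ b.size := Formula.card_comps_le_size b
        _ ≤ (Formula.ex z b).size - 2 := by simp [Formula.size]
  | atom p args => simp [contrib]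
  | neg a => simp [contrib]
  | and a b => simp [contrib]
  | or a b => simp [contrib]
  | box a => simp [contrib]
  | dia a => simp [contrib]

lemma contrib_mem_all {z : ℕ} {b β : Formula} (h : β ∈ b.comps) :
    (z, β) ∈ contrib (.all z b) := by
  simp only [contrib, Finset.mem_image]
  exact ⟨β, h, rfl⟩

lemma contrib_mem_ex {z : ℕ} {b β : Formula} (h : β ∈ b.comps) :
    (z, β) ∈ contrib (.ex z b) := by
  simp only [contrib, Finset.mem_image]
  exact ⟨β, h, rfl⟩
/-- the bounded-witness lemma.  Let
`Γ' = Γ ∪ {∀x φ}` be a clean finite set of formulas, each a subformula of the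
`ABBABE` fragment, where `∃y◇ψ` is a component of `φ`.  If `⋀Γ ∧ ∀x φ[∃y◇ψ]` is
satisfiable in an increasing domain model, then there is `l ≤ 2^{|Γ'|}` such
that `⋀Γ ∧ ∃y1∃y1'…∃yl∃yl' ∀x φ[ȳ◇ψ]` is satisfiable in an increasing domain
model, where `y1,y1',…,yl,yl'` are fresh variables and `φ[ȳ◇ψ]` is `φ` with the
component `∃y◇ψ` replaced by `⋁_{i≤l}(◇ψ[yi/y] ∨ ◇ψ[yi'/y])`. -/
theorem bounded_witnesses (Γ : Finset Formula) (x y : ℕ) (φ ψ : Formula)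
    (hclean : CleanSet (insert (Formula.all x φ) Γ))
    (hsub : ∀ γ ∈ insert (Formula.all x φ) Γ, IsSubABBABE γ)
    (hcomp : Formula.ex y (.dia ψ) ∈ φ.comps)
    (hsat : SatSet (insert (Formula.all x φ) Γ)) :
    ∃ l ≤ 2 ^ ((insert (Formula.all x φ) Γ).sum Formula.size),
      ∀ ys : List (ℕ × ℕ), ys.length = l →
        (ys.map Prod.fst ++ ys.map Prod.snd).Nodup →
        (∀ v ∈ ys.map Prod.fst ++ ys.map Prod.snd,
          ∀ γ ∈ insert (Formula.all x φ) Γ, v ∉ γ.fv ∪ γ.bv) →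
        SatSet (insert
          (exChain ys (Formula.all x (replComp (.ex y (.dia ψ)) (mkWitDisj y ψ ys) φ)))
          Γ) := by
  classical
  -- shape of φ
  have hShφ : Sh0 φ := by
    rcases isSub_sh1 (hsub _ (Finset.mem_insert_self _ _)) with h | ⟨z, body, h | h, hb⟩
    · cases h with
      | allBox z β => simp [Formula.comps] at hcomp
    · injection h with h1 h2; rwa [h2]
    · exact Formula.noConfusion h
  -- cleanliness consequences
  have hγ₀mem : Formula.all x φ ∈ insert (Formula.all x φ) Γ := Finset.mem_insert_self _ _
  have huBγ₀ : (Formula.all x φ).uniqueBinders := hclean.1 _ hγ₀mem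
  have huBφ : φ.uniqueBinders := huBγ₀.1
  have hxbv : x ∉ φ.bv := huBγ₀.2
  have huBt : (Formula.ex y (.dia ψ)).uniqueBinders :=
    Formula.uB_of_mem_comps φ _ hcomp huBφ
  have hybvψ : y ∉ ψ.bv := huBt.2
  have hbvtφ : (Formula.ex y (.dia ψ)).bv ⊆ φ.bv := Formula.bv_of_mem_comps φ _ hcomp
  have hybvφ : y ∈ φ.bv := hbvtφ (by simp [Formula.bv])
  have hbvψφ : ψ.bv ⊆ φ.bv := fun z hz => hbvtφ (by simp [Formula.bv, hz])
  have hxy : x ≠ y := fun h => hxbv (h ▸ hybvφ)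
  -- free variables of ψ
  have hfvφ : ∀ z ∈ φ.fv, z = x ∨ z ∈ (insert (Formula.all x φ) Γ).sup Formula.fv := by
    intro z hz
    by_cases hzx : z = x
    · exact Or.inl hzx
    · exact Or.inr ((Finset.le_sup (f := Formula.fv) hγ₀mem) (by simp [Formula.fv, Finset.mem_erase, hzx, hz]))
  have hfvt : (Formula.ex y (.dia ψ)).fv ⊆ φ.fv := Sh0.fv_of_ex_mem_comps hShφ hcomp
  have hfvψ : ∀ z ∈ ψ.fv, z = y ∨ z = x ∨
      z ∈ (insert (Formula.all x φ) Γ).sup Formula.fv := by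
    intro z hz
    by_cases hzy : z = y
    · exact Or.inl hzy
    · have : z ∈ φ.fv := hfvt (by simp [Formula.fv, Finset.mem_erase, hzy, hz])
      exact Or.inr (hfvφ z this)
  -- the original model
  obtain ⟨M, hM, w, σ, hrel, hsatΓ'⟩ := hsat
  haveI hMDne : Nonempty M.D := hM.2.1
  -- the shadow model
  have hKsat : ∀ γ ∈ insert (Formula.all x φ) Γ, (shadow M).sat w (fun z => Sum.inl (σ z)) γ := by
    intro γ hγ
    rw [shadow_sat]
    exact hsatΓ' γ hγ
  -- protected variables and values
  set F : Finset ℕ := insert x ((insert (Formula.all x φ) Γ).sup Formula.fv) with hF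
  set VF : Finset M.D := F.image σ with hVF
  set Vs : Set (shadow M).D := {d | ∃ z ∈ F, d = Sum.inl (σ z)} with hVs
  -- the type index and types
  set IF : Finset (ℕ × Formula) := (insert (Formula.all x φ) Γ).biUnion contrib with hIF
  set tp : (shadow M).D → Finset (ℕ × Formula) :=
    fun ζ => IF.filter (fun q =>
      (shadow M).sat w (Function.update (fun z => Sum.inl (σ z)) q.1 ζ) q.2) with htp
  have htp_clps : ∀ ζ ζ' : (shadow M).D, clps ζ = clps ζ' → tp ζ = tp ζ' := by
    intro ζ ζ' h
    rw [htp]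
    apply Finset.filter_congr
    intro q _
    rw [shadow_sat, shadow_sat]
    have heq : (fun z => clps (Function.update (fun z' => Sum.inl (σ z')) q.1 ζ z))
        = (fun z => clps (Function.update (fun z' => Sum.inl (σ z')) q.1 ζ' z)) := by
      funext z
      by_cases hz : z = q.1
      · subst hz; simp [Function.update, h]
      · simp [Function.update, hz]
    rw [heq]
  -- realized types and representatives
  set TS : Finset (Finset (ℕ × Formula)) := IF.powerset.filter
    (fun T => ∃ d : M.D, d ∈ M.dom w ∧ d ∉ VF ∧ tp (Sum.inl d) = T) with hTS
  have hrepex : ∀ T ∈ TS, ∃ d : M.D, d ∈ M.dom w ∧ d ∉ VF ∧ tp (Sum.inl d) = T := by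
    intro T hT
    exact (Finset.mem_filter.mp hT).2
  choose! rep hrep1 hrep2 hrep3 using hrepex
  -- the cardinality bound
  set S : ℕ := (insert (Formula.all x φ) Γ).sum Formula.size with hS
  have hS6 : 6 ≤ S := by
    have h1 : (Formula.ex y (.dia ψ)).size ≤ φ.size := Formula.size_of_mem_comps φ _ hcomp
    have h2 : 1 ≤ ψ.size := Formula.size_pos ψ
    have h3 : (Formula.all x φ).size ≤ S := by
      rw [hS]
      exact Finset.single_le_sum (fun γ _ => Nat.zero_le _) hγ₀mem
    simp only [Formula.size] at h1 h3
    omega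
  have hbound : TS.card + VF.card ≤ 2 ^ S := by
    have hTSc : TS.card ≤ 2 ^ IF.card := by
      calc TS.card ≤ IF.powerset.card := by rw [hTS]; exact Finset.card_filter_le _ _
        _ = 2 ^ IF.card := Finset.card_powerset IF
    have hIFc : IF.card ≤ S - 2 := by
      have h1 : IF.card ≤ ∑ γ ∈ insert (Formula.all x φ) Γ, (contrib γ).card := by
        rw [hIF]; exact Finset.card_biUnion_le
      have h3 : (contrib (Formula.all x φ)).card
            + ∑ γ ∈ (insert (Formula.all x φ) Γ).erase (Formula.all x φ), (contrib γ).card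
          = ∑ γ ∈ insert (Formula.all x φ) Γ, (contrib γ).card :=
        Finset.add_sum_erase _ (fun γ => (contrib γ).card) hγ₀mem
      have h4 : (Formula.all x φ).size
            + ∑ γ ∈ (insert (Formula.all x φ) Γ).erase (Formula.all x φ), γ.size
          = ∑ γ ∈ insert (Formula.all x φ) Γ, γ.size :=
        Finset.add_sum_erase _ Formula.size hγ₀mem
      have h5 : (contrib (Formula.all x φ)).card ≤ (Formula.all x φ).size - 2 :=
        contrib_card _
      have h6 : ∑ γ ∈ (insert (Formula.all x φ) Γ).erase (Formula.all x φ), (contrib γ).card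
          ≤ ∑ γ ∈ (insert (Formula.all x φ) Γ).erase (Formula.all x φ), γ.size :=
        Finset.sum_le_sum (fun γ _ => le_trans (contrib_card γ) (by omega))
      have h7 : 2 ≤ (Formula.all x φ).size := by simp [Formula.size]
      have h8 : S = ∑ γ ∈ insert (Formula.all x φ) Γ, γ.size := hS
      omega
    have hVFc : VF.card ≤ S + 1 := by
      have h1 : VF.card ≤ F.card := by rw [hVF]; exact Finset.card_image_le
      have h2 : F.card ≤ ((insert (Formula.all x φ) Γ).sup Formula.fv).card + 1 := by
        rw [hF]
        have := Finset.card_insert_le x ((insert (Formula.all x φ) Γ).sup Formula.fv)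
        omega
      have h3 : ((insert (Formula.all x φ) Γ).sup Formula.fv).card
          ≤ ∑ γ ∈ insert (Formula.all x φ) Γ, (γ.fv).card := by
        rw [Finset.sup_eq_biUnion]
        exact Finset.card_biUnion_le
      have h4 : ∑ γ ∈ insert (Formula.all x φ) Γ, (γ.fv).card ≤ S := by
        rw [hS]
        exact Finset.sum_le_sum (fun γ _ => Formula.card_fv_le_size γ)
      omega
    have harith1 : S + 1 ≤ 2 ^ (S - 2) := by
      have := nat_add_three_le_two_pow (S - 2) (by omega)
      omega
    have harith2 : 2 ^ (S - 2) + 2 ^ (S - 2) ≤ 2 ^ S := by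
      have h := Nat.pow_le_pow_right (show 1 ≤ 2 by omega) (show (S - 2) + 1 ≤ S by omega)
      rw [pow_succ] at h
      omega
    have hTS2 : TS.card ≤ 2 ^ (S - 2) :=
      le_trans hTSc (Nat.pow_le_pow_right (by omega) hIFc)
    omega
  refine ⟨TS.card + VF.card, hbound, ?_⟩
  intro ys hlen hnd hfresh
  -- freshness consequences
  have hfreshF : ∀ v ∈ ys.map Prod.fst ++ ys.map Prod.snd, v ∉ F ∧ v ∉ ψ.bv ∧ v ≠ x := by
    intro v hv
    have h := hfresh v hv
    refine ⟨?_, ?_, ?_⟩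
    · rw [hF]
      intro hc
      rcases Finset.mem_insert.mp hc with hc | hc
      · subst hc
        exact (h _ hγ₀mem) (Finset.mem_union_right _ (by simp [Formula.bv]))
      · rw [Finset.mem_sup] at hc
        obtain ⟨γ, hγ, hvγ⟩ := hc
        exact (h γ hγ) (Finset.mem_union_left _ hvγ)
    · intro hc
      exact (h _ hγ₀mem) (Finset.mem_union_right _
        (by simp only [Formula.bv, Finset.mem_insert]; exact Or.inr (hbvψφ hc)))
    · intro hc
      subst hc
      exact (h _ hγ₀mem) (Finset.mem_union_right _ (by simp [Formula.bv]))
  -- the value list and the final assignment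
  set LV : List ((shadow M).D × (shadow M).D) :=
    (TS.toList.map (fun T => ((Sum.inl (rep T) : (shadow M).D), (Sum.inr (rep T) : (shadow M).D))))
      ++ (VF.toList.map (fun u => ((Sum.inr u : (shadow M).D), (Sum.inr u : (shadow M).D)))) with hLV
  have hLVlen : ys.length = LV.length := by
    rw [hlen, hLV]
    simp
  set zs : List ((ℕ × ℕ) × ((shadow M).D × (shadow M).D)) := ys.zip LV with hzs
  have hzsfst : zs.map Prod.fst = ys := by
    rw [hzs]
    exact List.map_fst_zip (le_of_eq hLVlen)
  have hzssnd : zs.map Prod.snd = LV := by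
    rw [hzs]
    exact List.map_snd_zip (ge_of_eq hLVlen)
  set σA : ℕ → (shadow M).D := seqUpd2 zs (fun z => Sum.inl (σ z)) with hσA
  have hmemzs : ∀ q ∈ zs, σA q.1.1 = q.2.1 ∧ σA q.1.2 = q.2.2 := by
    intro q hq
    rw [hσA]
    refine seqUpd2_mem zs ?_ _ q hq
    rw [hzsfst]
    exact hnd
  have hσA_F : ∀ z ∈ F, σA z = Sum.inl (σ z) := by
    intro z hz
    rw [hσA]
    apply seqUpd2_notmem
    intro q hq
    have hq1 : q.1 ∈ ys := by
      rw [← hzsfst]; exact List.mem_map_of_mem (f := Prod.fst) hq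
    constructor
    · intro hc
      exact (hfreshF q.1.1 (List.mem_append_left _
        (List.mem_map_of_mem (f := Prod.fst) hq1))).1 (hc ▸ hz)
    · intro hc
      exact (hfreshF q.1.2 (List.mem_append_right _
        (List.mem_map_of_mem (f := Prod.snd) hq1))).1 (hc ▸ hz)
  -- values are in the root domain
  have hval_dom : ∀ q ∈ zs, q.2.1 ∈ (shadow M).dom w ∧ q.2.2 ∈ (shadow M).dom w := by
    intro q hq
    have hq2 : q.2 ∈ LV := by rw [← hzssnd]; exact List.mem_map_of_mem (f := Prod.snd) hq
    rw [hLV] at hq2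
    rcases List.mem_append.mp hq2 with h | h
    · obtain ⟨T, hT, hTe⟩ := List.mem_map.mp h
      have hTmem : T ∈ TS := Finset.mem_toList.mp hT
      have hdom := hrep1 T hTmem
      rw [← hTe]
      exact ⟨hdom, hdom⟩
    · obtain ⟨u, hu, hue⟩ := List.mem_map.mp h
      have huV : u ∈ VF := Finset.mem_toList.mp hu
      rw [hVF] at huV
      obtain ⟨z, _, hz2⟩ := Finset.mem_image.mp huV
      have : u ∈ M.dom w := hz2 ▸ hrel z
      rw [← hue]
      exact ⟨this, this⟩
  -- swap goodness
  set Good : (shadow M).D × (shadow M).D → Prop := fun p =>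
    p.1 ∈ (shadow M).dom w ∧ p.2 ∈ (shadow M).dom w ∧ tp p.1 = tp p.2 ∧
      p.1 ∉ Vs ∧ p.2 ∉ Vs with hGoodDef
  have hGooddom : ∀ p, Good p → p.1 ∈ (shadow M).dom w ∧ p.2 ∈ (shadow M).dom w :=
    fun p hp => ⟨hp.1, hp.2.1⟩
  have hswp_fix : ∀ p, Good p → ∀ d ∈ Vs, swp p d = d := by
    intro p hp d hd
    exact swp_other p d (fun hc => hp.2.2.2.1 (hc ▸ hd)) (fun hc => hp.2.2.2.2 (hc ▸ hd))
  have htp_swp : ∀ p, Good p → ∀ ζ, tp (swp p ζ) = tp ζ := by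
    intro p hp ζ
    by_cases h1 : ζ = p.1
    · rw [h1, swp_fst]; exact hp.2.2.1.symm
    · by_cases h2 : ζ = p.2
      · rw [h2, swp_snd]; exact hp.2.2.1
      · rw [swp_other p ζ h1 h2]
  have hFfix : ∀ p, Good p → ∀ z ∈ F, swp p (σA z) = σA z := by
    intro p hp z hz
    rw [hσA_F z hz]
    exact hswp_fix p hp _ ⟨z, hz, rfl⟩
  -- transfer of components between elements of equal type
  have hTRANS : ∀ (z₀ : ℕ) (b : Formula),
      ((Formula.all z₀ b) ∈ insert (Formula.all x φ) Γ ∨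
        (Formula.ex z₀ b) ∈ insert (Formula.all x φ) Γ) →
      ∀ (ζ : (shadow M).D) (β : Formula) (p : (shadow M).D × (shadow M).D),
        Good p → β ∈ b.comps → (∀ z ∈ β.fv, z = z₀ ∨ z ∈ F) →
        (shadow M).sat w (Function.update σA z₀ ζ) β →
        (shadow M).sat w (Function.update σA z₀ (swp p ζ)) β := by
    intro z₀ b hb ζ β p hp hβ hfvβ hs
    have hqIF : (z₀, β) ∈ IF := by
      rw [hIF, Finset.mem_biUnion]
      rcases hb with hb | hb
      · exact ⟨_, hb, contrib_mem_all hβ⟩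
      · exact ⟨_, hb, contrib_mem_ex hβ⟩
    have hagree : ∀ τζ : (shadow M).D, ∀ z ∈ β.fv,
        Function.update σA z₀ τζ z
          = Function.update (fun z' => Sum.inl (σ z')) z₀ τζ z := by
      intro τζ z hz
      by_cases hzz : z = z₀
      · subst hzz; simp [Function.update]
      · rw [Function.update_of_ne hzz, Function.update_of_ne hzz]
        rcases hfvβ z hz with h | h
        · exact absurd h hzz
        · exact hσA_F z h
    have hs' : (shadow M).sat w
        (Function.update (fun z' => Sum.inl (σ z')) z₀ ζ) β :=
      ((shadow M).sat_congr β w _ _ (hagree ζ)).mp hs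
    have hmem : (z₀, β) ∈ tp ζ := by
      rw [htp]; exact Finset.mem_filter.mpr ⟨hqIF, hs'⟩
    rw [← htp_swp p hp ζ] at hmem
    rw [htp] at hmem
    have hs'' := (Finset.mem_filter.mp hmem).2
    exact ((shadow M).sat_congr β w _ _ (hagree (swp p ζ))).mpr hs''
  -- the "keep" leaf: the unreplaced existential component survives at the root
  have hLeafKeep : ∀ τ, (shadow M).sat w τ (Formula.ex y (.dia ψ)) →
      (extend (shadow M) w Good).sat none τ (Formula.ex y (.dia ψ)) := by
    rintro τ ⟨d, hd, v, hRv, hs⟩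
    exact ⟨d, hd, some (Sum.inl v), hRv, (extend_sat_inl (shadow M) w Good ψ v _).mpr hs⟩
  -- the witness extraction
  have hwit : ∀ ζ : (shadow M).D, ζ ∈ (shadow M).dom w →
      (shadow M).sat w (Function.update σA x ζ) (Formula.ex y (.dia ψ)) →
      ∃ (e : M.D) (v : M.W), e ∈ M.dom w ∧ M.R w v ∧ ∀ ε : (shadow M).D, clps ε = e →
        (shadow M).sat v (Function.update (Function.update σA x ζ) y ε) ψ := by
    rintro ζ hζ ⟨ε₀, hε₀, v, hRv, hψs⟩
    refine ⟨clps ε₀, v, hε₀, hRv, ?_⟩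
    intro ε hε
    rw [shadow_sat] at hψs ⊢
    have heq : (fun z => clps (Function.update (Function.update σA x ζ) y ε z))
        = (fun z => clps (Function.update (Function.update σA x ζ) y ε₀ z)) := by
      funext z
      by_cases hz : z = y
      · subst hz; simp [Function.update, hε]
      · simp [Function.update, hz]
    rw [heq]
    exact hψs
  -- the replacement leaf
  have hLEAF : ∀ ζ, ζ ∈ (shadow M).dom w →
      (shadow M).sat w (Function.update σA x ζ) (Formula.ex y (.dia ψ)) →
      (extend (shadow M) w Good).sat none (Function.update σA x ζ) (mkWitDisj y ψ ys) := by
    intro ζ hζ hsatt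
    obtain ⟨e, v, hedom, hRv, hinv⟩ := hwit ζ hζ hsatt
    unfold mkWitDisj
    by_cases heV : e ∈ VF
    · -- the witness value is protected : use a direct pair
      obtain ⟨q, hqzs, hq2⟩ : ∃ q ∈ zs,
          Prod.snd q = ((Sum.inr e : (shadow M).D), (Sum.inr e : (shadow M).D)) := by
        have hLVmem : ((Sum.inr e : (shadow M).D), (Sum.inr e : (shadow M).D)) ∈ LV := by
          rw [hLV]
          exact List.mem_append_right _
            (List.mem_map.mpr ⟨e, Finset.mem_toList.mpr heV, rfl⟩)
        rw [← hzssnd] at hLVmem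
        exact List.mem_map.mp hLVmem
      have hσAq := hmemzs q hqzs
      have hq1mem : q.1 ∈ ys := by
        rw [← hzsfst]; exact List.mem_map_of_mem (f := Prod.fst) hqzs
      have hfr := hfreshF q.1.1
        (List.mem_append_left _ (List.mem_map_of_mem (f := Prod.fst) hq1mem))
      apply bigOr_intro _ _ _ _ _ (List.mem_map.mpr ⟨q.1, hq1mem, rfl⟩)
      refine Or.inl ⟨some (Sum.inl v), hRv, ?_⟩
      refine (extend_sat_inl _ _ _ _ _ _).mpr ?_
      rw [(shadow M).sat_subst ψ v _ y q.1.1 hybvψ hfr.2.1]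
      have hval : Function.update σA x ζ q.1.1 = Sum.inr e := by
        rw [Function.update_of_ne hfr.2.2, hσAq.1, hq2]
      rw [hval]
      exact hinv (Sum.inr e) rfl
    · -- redirect the witness onto a representative of its type
      have hTmem : tp (Sum.inl e) ∈ TS := by
        rw [hTS]
        refine Finset.mem_filter.mpr ⟨Finset.mem_powerset.mpr ?_, ⟨e, hedom, heV, rfl⟩⟩
        rw [htp]
        exact Finset.filter_subset _ _
      have hcdom : rep (tp (Sum.inl e)) ∈ M.dom w := hrep1 _ hTmem
      have hcV : rep (tp (Sum.inl e)) ∉ VF := hrep2 _ hTmem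
      have hctp : tp (Sum.inl (rep (tp (Sum.inl e)))) = tp (Sum.inl e) := hrep3 _ hTmem
      set c : M.D := rep (tp (Sum.inl e)) with hcdef
      obtain ⟨q, hqzs, hq2⟩ : ∃ q ∈ zs,
          Prod.snd q = ((Sum.inl c : (shadow M).D), (Sum.inr c : (shadow M).D)) := by
        have hLVmem : ((Sum.inl c : (shadow M).D), (Sum.inr c : (shadow M).D)) ∈ LV := by
          rw [hLV]
          exact List.mem_append_left _
            (List.mem_map.mpr ⟨tp (Sum.inl e), Finset.mem_toList.mpr hTmem, rfl⟩)
        rw [← hzssnd] at hLVmem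
        exact List.mem_map.mp hLVmem
      have hσAq := hmemzs q hqzs
      have hq1mem : q.1 ∈ ys := by
        rw [← hzsfst]; exact List.mem_map_of_mem (f := Prod.fst) hqzs
      set εv : (shadow M).D := if ζ = Sum.inr e then Sum.inl e else Sum.inr e with hεdef
      have hεclps : clps εv = e := by
        rw [hεdef]; split <;> rfl
      have hεζ : εv ≠ ζ := by
        rw [hεdef]; split
        · rename_i h; rw [h]; simp
        · rename_i h; exact fun hc => h hc.symm
      have hεV : εv ∉ Vs := by
        rw [hεdef]; split
        · intro hc
          rw [hVs] at hc
          obtain ⟨z, hzF, heq⟩ := hc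
          have : e = σ z := Sum.inl.inj heq
          exact heV (by rw [hVF]; exact Finset.mem_image.mpr ⟨z, hzF, this.symm⟩)
        · intro hc
          rw [hVs] at hc
          obtain ⟨z, hzF, heq⟩ := hc
          simp at heq
      have key : ∀ (yv : ℕ) (rv : (shadow M).D),
          yv ∈ ys.map Prod.fst ++ ys.map Prod.snd → σA yv = rv →
          clps rv = c → rv ≠ ζ → rv ∉ Vs →
          (extend (shadow M) w Good).sat none (Function.update σA x ζ)
            (Formula.dia (ψ.subst y yv)) := by
        intro yv rv hyvmem hyv hrc hrζ hrV
        have hfr := hfreshF yv hyvmem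
        have hGp : Good (rv, εv) := by
          refine ⟨?_, ?_, ?_, hrV, hεV⟩
          · show clps rv ∈ M.dom w
            rw [hrc]; exact hcdom
          · show clps εv ∈ M.dom w
            rw [hεclps]; exact hedom
          · show tp rv = tp εv
            have h1 : tp rv = tp (Sum.inl c) := htp_clps _ _ (by rw [hrc]; rfl)
            have h2 : tp εv = tp (Sum.inl e) := htp_clps _ _ (by rw [hεclps]; rfl)
            rw [h1, h2, hctp]
        refine ⟨some (Sum.inr (v, (rv, εv))), ⟨hRv, hGp⟩, ?_⟩
        refine (extend_sat_inr _ _ _ _ _ _ _).mpr ?_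
        rw [(shadow M).sat_subst ψ v _ y yv hybvψ hfr.2.1]
        have hval : swp (rv, εv) (Function.update σA x ζ yv) = εv := by
          rw [Function.update_of_ne hfr.2.2, hyv]
          exact swp_fst (rv, εv)
        rw [hval]
        refine ((shadow M).sat_congr ψ v _ _ ?_).mpr (hinv εv hεclps)
        intro z hz
        by_cases hzy : z = y
        · subst hzy; simp [Function.update]
        · rw [Function.update_of_ne hzy, Function.update_of_ne hzy]
          show swp (rv, εv) (Function.update σA x ζ z) = Function.update σA x ζ z
          by_cases hzx : z = x
          · subst hzx
            rw [Function.update_self]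
            exact swp_other _ ζ (fun hc => hrζ hc.symm) (fun hc => hεζ hc.symm)
          · rw [Function.update_of_ne hzx]
            rcases hfvψ z hz with h | h | h
            · exact absurd h hzy
            · exact absurd h hzx
            · have hzF : z ∈ F := by rw [hF]; exact Finset.mem_insert_of_mem h
              rw [hσA_F z hzF]
              exact hswp_fix (rv, εv) hGp _ ⟨z, hzF, rfl⟩
      by_cases hζc : ζ = Sum.inr c
      · apply bigOr_intro _ _ _ _ _ (List.mem_map.mpr ⟨q.1, hq1mem, rfl⟩)
        refine Or.inl (key q.1.1 (Sum.inl c)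
          (List.mem_append_left _ (List.mem_map_of_mem (f := Prod.fst) hq1mem))
          (by rw [hσAq.1, hq2]) rfl ?_ ?_)
        · rw [hζc]; simp
        · intro hc
          rw [hVs] at hc
          obtain ⟨z, hzF, heq⟩ := hc
          have : c = σ z := Sum.inl.inj heq
          exact hcV (by rw [hVF]; exact Finset.mem_image.mpr ⟨z, hzF, this.symm⟩)
      · apply bigOr_intro _ _ _ _ _ (List.mem_map.mpr ⟨q.1, hq1mem, rfl⟩)
        refine Or.inr (key q.1.2 (Sum.inr c)
          (List.mem_append_right _ (List.mem_map_of_mem (f := Prod.snd) hq1mem))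
          (by rw [hσAq.2, hq2]) rfl (fun hc => hζc hc.symm) ?_)
        intro hc
        rw [hVs] at hc
        obtain ⟨z, hzF, heq⟩ := hc
        simp at heq
  -- satisfaction of Γ at the root of the extended model
  have hxF : x ∈ F := by rw [hF]; exact Finset.mem_insert_self _ _
  have hΓsat : ∀ γ ∈ Γ, (extend (shadow M) w Good).sat none (fun z => Sum.inl (σ z)) γ := by
    intro γ hγ
    have hγ' : γ ∈ insert (Formula.all x φ) Γ := Finset.mem_insert_of_mem hγ
    have hfvγ : ∀ z ∈ γ.fv, z ∈ F := by
      intro z hz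
      rw [hF]
      exact Finset.mem_insert_of_mem ((Finset.le_sup (f := Formula.fv) hγ') hz)
    rcases isSub_sh1 (hsub γ hγ') with hSh | ⟨z, body, hform, hb⟩
    · -- Sh0 run with a fixed protected value
      have hζdom : (Sum.inl (σ x) : (shadow M).D) ∈ (shadow M).dom w := hrel x
      have hsatin : (shadow M).sat w (Function.update σA x (Sum.inl (σ x))) γ := by
        refine ((shadow M).sat_congr γ w _ _ ?_).mpr (hKsat γ hγ')
        intro z hz
        by_cases hzz : z = x
        · subst hzz; simp [Function.update]
        · rw [Function.update_of_ne hzz]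
          exact hσA_F z (hfvγ z hz)
      have hout := root_sat (shadow M) w Good σA F (fun β => β ∈ γ.comps) y ψ
        (Formula.ex y (.dia ψ)) x (Sum.inl (σ x)) hGooddom hFfix hζdom
        (by intro β p hp _ _ hs
            rw [hswp_fix p hp _ ⟨x, hxF, rfl⟩]
            exact hs)
        (fun _ hs => hLeafKeep _ hs)
        γ hSh (fun z hz => Or.inr (hfvγ z hz)) (fun β hβ => hβ) hsatin
      rw [replComp_id] at hout
      refine ((extend (shadow M) w Good).sat_congr γ none _ _ ?_).mp hout
      intro z hz
      by_cases hzz : z = x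
      · subst hzz; simp [Function.update]
      · rw [Function.update_of_ne hzz]
        exact hσA_F z (hfvγ z hz)
    · have hfvbody : ∀ z' ∈ body.fv, z' = z ∨ z' ∈ F := by
        intro z' hz'
        by_cases hzz : z' = z
        · exact Or.inl hzz
        · refine Or.inr (hfvγ z' ?_)
          rcases hform with hform | hform <;>
            (rw [hform]; simp [Formula.fv, Finset.mem_erase, hzz, hz'])
      rcases hform with hform | hform
      · -- γ = all z body
        subst hform
        intro d hd
        have hsatin : (shadow M).sat w (Function.update σA z d) body := by
          have h0 := hKsat _ hγ' d hd
          refine ((shadow M).sat_congr body w _ _ ?_).mpr h0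
          intro z' hz'
          by_cases hzz : z' = z
          · subst hzz; simp [Function.update]
          · rw [Function.update_of_ne hzz, Function.update_of_ne hzz]
            rcases hfvbody z' hz' with h | h
            · exact absurd h hzz
            · exact hσA_F z' h
        have hout := root_sat (shadow M) w Good σA F (fun β => β ∈ body.comps) y ψ
          (Formula.ex y (.dia ψ)) z d hGooddom hFfix hd
          (fun β p hp hβ hfv hs => hTRANS z body (Or.inl hγ') d β p hp hβ hfv hs)
          (fun _ hs => hLeafKeep _ hs)
          body hb hfvbody (fun β hβ => hβ) hsatin
        rw [replComp_id] at hout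
        refine ((extend (shadow M) w Good).sat_congr body none _ _ ?_).mp hout
        intro z' hz'
        by_cases hzz : z' = z
        · subst hzz; simp [Function.update]
        · rw [Function.update_of_ne hzz, Function.update_of_ne hzz]
          rcases hfvbody z' hz' with h | h
          · exact absurd h hzz
          · exact hσA_F z' h
      · -- γ = ex z body
        subst hform
        obtain ⟨d, hd, hs0⟩ := hKsat _ hγ'
        refine ⟨d, hd, ?_⟩
        have hsatin : (shadow M).sat w (Function.update σA z d) body := by
          refine ((shadow M).sat_congr body w _ _ ?_).mpr hs0
          intro z' hz'
          by_cases hzz : z' = z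
          · subst hzz; simp [Function.update]
          · rw [Function.update_of_ne hzz, Function.update_of_ne hzz]
            rcases hfvbody z' hz' with h | h
            · exact absurd h hzz
            · exact hσA_F z' h
        have hout := root_sat (shadow M) w Good σA F (fun β => β ∈ body.comps) y ψ
          (Formula.ex y (.dia ψ)) z d hGooddom hFfix hd
          (fun β p hp hβ hfv hs => hTRANS z body (Or.inr hγ') d β p hp hβ hfv hs)
          (fun _ hs => hLeafKeep _ hs)
          body hb hfvbody (fun β hβ => hβ) hsatin
        rw [replComp_id] at hout
        refine ((extend (shadow M) w Good).sat_congr body none _ _ ?_).mp hout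
        intro z' hz'
        by_cases hzz : z' = z
        · subst hzz; simp [Function.update]
        · rw [Function.update_of_ne hzz, Function.update_of_ne hzz]
          rcases hfvbody z' hz' with h | h
          · exact absurd h hzz
          · exact hσA_F z' h
  -- satisfaction of the main formula at the root
  have hMain : (extend (shadow M) w Good).sat none (fun z => Sum.inl (σ z))
      (exChain ys (Formula.all x
        (replComp (.ex y (.dia ψ)) (mkWitDisj y ψ ys) φ))) := by
    have hm : (extend (shadow M) w Good).sat none (fun z => Sum.inl (σ z))
        (exChain (zs.map Prod.fst) (Formula.all x
          (replComp (.ex y (.dia ψ)) (mkWitDisj y ψ ys) φ))) := by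
      apply exChain_sat2 (extend (shadow M) w Good) none _ zs (fun z => Sum.inl (σ z))
        (fun q hq => hval_dom q hq)
      rw [← hσA]
      intro ζ hζ
      have hsatin : (shadow M).sat w (Function.update σA x ζ) φ := by
        have h0 := hKsat _ hγ₀mem ζ hζ
        refine ((shadow M).sat_congr φ w _ _ ?_).mpr h0
        intro z' hz'
        by_cases hzz : z' = x
        · subst hzz; simp [Function.update]
        · rw [Function.update_of_ne hzz, Function.update_of_ne hzz]
          rcases hfvφ z' hz' with h | h
          · exact absurd h hzz
          · exact hσA_F z' (by rw [hF]; exact Finset.mem_insert_of_mem h)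
      exact root_sat (shadow M) w Good σA F (fun β => β ∈ φ.comps) y ψ
        (mkWitDisj y ψ ys) x ζ hGooddom hFfix hζ
        (fun β p hp hβ hfv hs => hTRANS x φ (Or.inl hγ₀mem) ζ β p hp hβ hfv hs)
        (fun _ hs => hLEAF ζ hζ hs)
        φ hShφ
        (fun z hz => (hfvφ z hz).imp id
          (fun h => by rw [hF]; exact Finset.mem_insert_of_mem h))
        (fun β hβ => hβ) hsatin
    rwa [hzsfst] at hm
  -- assembling the model
  refine ⟨extend (shadow M) w Good,
    extend_increasing (shadow M) w Good (shadow_increasing M hM)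
      (fun p hp => ⟨hp.1, hp.2.1⟩), none, (fun z => Sum.inl (σ z)), ?_, ?_⟩
  · intro z
    exact hrel z
  · intro γ' hγ'
    rcases Finset.mem_insert.mp hγ' with h | h
    · rw [h]; exact hMain
    · exact hΓsat γ' h
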